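/- arXiv:1203.0105 — 3 statements merged into one kernel-verified Lean document; each statement's English description precedes it below -/
import Mathlib

section
/- Let k ≥ 2 and n > 2k. Let W be a 2k-dimensional left vector space over a division ring, X = {x_1,…,x_n} a (2k)-independent subset of W, and Y = {y*_1,…,y*_n} a (2k)-independent subset of the dual space W*; let U_i denote the annihilator of y*_i in W. Assume that every U_i is spanned by a subset of X and that every line ⟨x_i⟩ is the intersection of some of the subspaces U_j. Then |J_k(X) ∩ J*_k(Y)| < a(n,k) = C(n−2,k−2) + C(n−1,k). -/
open Submodule Set Function Module

/-- A family of vectors is `m`-independent if every `m`-element subfamily is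
linearly independent. -/
def MIndep (R : Type*) {W : Type*} [DivisionRing R] [AddCommGroup W] [Module R W]
    {n : ℕ} (m : ℕ) (x : Fin n → W) : Prop :=
  ∀ A : Finset (Fin n), A.card = m → LinearIndependent R (fun i : A => x (i : Fin n))

/-- `J_k(X)`: the set of all `k`-dimensional subspaces spanned by `k`-element subsets of
the family `x`. -/
def JkSet (R : Type*) {W : Type*} [DivisionRing R] [AddCommGroup W] [Module R W]
    {n : ℕ} (k : ℕ) (x : Fin n → W) : Set (Submodule R W) :=
  {P | ∃ A : Finset (Fin n), A.card = k ∧ P = Submodule.span R (x '' ↑A)}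

/-- The special subset `J(+i,+j) ∪ J(-i)` of `J = J_k(X)`: all members of `J` which either
contain both `x i` and `x j`, or do not contain `x i`. -/
def SpecialSubset (R : Type*) {W : Type*} [DivisionRing R] [AddCommGroup W] [Module R W]
    {n : ℕ} (k : ℕ) (x : Fin n → W) (i j : Fin n) : Set (Submodule R W) :=
  {P | P ∈ JkSet R k x ∧ ((x i ∈ P ∧ x j ∈ P) ∨ x i ∉ P)}

/-- A subset `Z` of `J = J_k(X)` is inexact if there is a `(2k)`-independent `n`-element
family `y` with `J_k(Y) ≠ J` and `Z ⊆ J_k(Y)`. -/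
def InexactIn (R : Type*) {W : Type*} [DivisionRing R] [AddCommGroup W] [Module R W]
    (n k : ℕ) (J : Set (Submodule R W)) (Z : Set (Submodule R W)) : Prop :=
  ∃ y : Fin n → W, Function.Injective y ∧ MIndep R (2 * k) y ∧
    JkSet R k y ≠ J ∧ Z ⊆ JkSet R k y

/-- `J*_k(Y)`: the set of annihilators in `W` of the elements of `J_k(Y)` for a family `y`
of linear functionals; equivalently, the intersections of `k` distinct kernels `U_j`. -/
def JStarSet (K : Type*) {W : Type*} [DivisionRing K] [AddCommGroup W] [Module K W]
    {n : ℕ} (k : ℕ) (y : Fin n → (W →ₗ[K] K)) : Set (Submodule K W) :=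
  {P | ∃ A : Finset (Fin n), A.card = k ∧ P = ⨅ i ∈ A, LinearMap.ker (y i)}

section AuxLemmas

variable {R V : Type*} [DivisionRing R] [AddCommGroup V] [Module R V]

lemma aux_mindep_restrict {n m : ℕ} {x : Fin n → V} (hx : MIndep R m x) (hmn : m ≤ n)
    {A : Finset (Fin n)} (hA : A.card ≤ m) :
    LinearIndependent R (fun i : A => x (i : Fin n)) := by
  obtain ⟨A', hAA', _, hcard⟩ := Finset.exists_subsuperset_card_eq (Finset.subset_univ A) hA
    (by simpa using hmn)
  have h := hx A' hcard
  have heq : (fun i : A' => x (i : Fin n)) ∘ (fun i : A => (⟨i.1, hAA' i.2⟩ : A')) =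
      fun i : A => x (i : Fin n) := rfl
  exact heq ▸ h.comp _ (fun a b hab => Subtype.ext (by
    have := congrArg Subtype.val hab
    simpa using this))

lemma aux_finrank_span {n k : ℕ} {x : Fin n → V} (hx : MIndep R (2*k) x) (h2kn : 2*k ≤ n)
    {A : Finset (Fin n)} (hA : A.card ≤ 2*k) :
    finrank R (span R (x '' ↑A)) = A.card := by
  have hli := aux_mindep_restrict hx h2kn hA
  have himg : x '' ↑A = Set.range (fun i : A => x (i : Fin n)) :=
    (Set.image_eq_range x ↑A)
  rw [himg, finrank_span_eq_card hli, Fintype.card_coe]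

lemma aux_card_le_finrank [FiniteDimensional R V] {n k : ℕ} {x : Fin n → V}
    (hx : MIndep R (2*k) x) (h2kn : 2*k ≤ n)
    {p : Submodule R V} (hp : finrank R p < 2*k)
    {A : Finset (Fin n)} (hA : ∀ i ∈ A, x i ∈ p) :
    A.card ≤ finrank R p := by
  by_contra h
  push_neg at h
  obtain ⟨B, hBA, hB⟩ := Finset.exists_subset_card_eq (s := A) (n := finrank R p + 1) (by omega)
  have h1 : finrank R (span R (x '' ↑B)) = finrank R p + 1 := by
    rw [aux_finrank_span hx h2kn (by omega), hB]
  have h2 : span R (x '' ↑B) ≤ p := span_le.mpr (by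
    rintro w ⟨i, hi, rfl⟩
    exact hA i (hBA (by exact_mod_cast hi)))
  have := Submodule.finrank_mono h2
  omega

end AuxLemmas

lemma aux_finrank_iInf {K W : Type*} [DivisionRing K] [AddCommGroup W] [Module K W]
    [FiniteDimensional K W] {n d : ℕ} (hW : finrank K W = d)
    {y : Fin n → (W →ₗ[K] K)}
    {S : Finset (Fin n)}
    (hind : LinearIndependent Kᵐᵒᵖ (fun j : S => y (j : Fin n))) :
    finrank K ((⨅ j ∈ S, LinearMap.ker (y j) : Submodule K W)) = d - S.card := by
  classical
  set Φ : W →ₗ[K] (S → K) := LinearMap.pi (fun j : S => y j) with hΦ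
  have hker : LinearMap.ker Φ = ⨅ j ∈ S, LinearMap.ker (y j) := by
    rw [LinearMap.ker_pi]
    exact (iInf_subtype' (p := fun j => j ∈ S) (f := fun j _ => LinearMap.ker (y j))).symm
  have hsurj : LinearMap.range Φ = ⊤ := by
    by_contra hne
    have hlt : LinearMap.range Φ < ⊤ := lt_top_iff_ne_top.mpr hne
    haveI := (Submodule.Quotient.nontrivial_iff.mpr hlt.ne : Nontrivial ((S → K) ⧸ LinearMap.range Φ))
    set b := Basis.ofVectorSpace K ((S → K) ⧸ LinearMap.range Φ) with hb
    obtain ⟨i0⟩ := b.index_nonempty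
    set g : (S → K) →ₗ[K] K := (b.coord i0) ∘ₗ (LinearMap.range Φ).mkQ with hg
    have hg0 : ∀ w : W, g (Φ w) = 0 := by
      intro w
      have hmem : Φ w ∈ LinearMap.range Φ := ⟨w, rfl⟩
      have : (LinearMap.range Φ).mkQ (Φ w) = 0 := (Submodule.Quotient.mk_eq_zero _).mpr hmem
      simp [hg, LinearMap.comp_apply, this]
    set e : S → (S → K) := fun i => fun j => if i = j then 1 else 0 with he
    set c : S → K := fun j => g (e j) with hc
    have hgsum : ∀ v : S → K, g v = ∑ j : S, v j * c j := by
      intro v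
      conv_lhs => rw [pi_eq_sum_univ v]
      rw [map_sum]
      refine Finset.sum_congr rfl (fun j _ => ?_)
      rw [map_smul, smul_eq_mul]
    have hdep : (∑ j : S, (MulOpposite.op (c j)) • y (j : Fin n)) = 0 := by
      ext w
      have h1 : (∑ j : S, (MulOpposite.op (c j)) • y (j : Fin n)) w
          = ∑ j : S, (y (j : Fin n) w) * c j := by
        rw [LinearMap.sum_apply]
        refine Finset.sum_congr rfl (fun j _ => ?_)
        rw [LinearMap.smul_apply, MulOpposite.smul_eq_mul_unop, MulOpposite.unop_op]
      have h2 : g (Φ w) = ∑ j : S, (y (j : Fin n) w) * c j := hgsum (Φ w)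
      rw [h1, LinearMap.zero_apply, ← h2, hg0]
    have hczero : ∀ j : S, c j = 0 := by
      intro j
      have := Fintype.linearIndependent_iff.mp hind (fun j => MulOpposite.op (c j)) hdep j
      exact MulOpposite.op_injective (by simpa using this)
    obtain ⟨u, hu⟩ := Submodule.mkQ_surjective (LinearMap.range Φ) (b i0)
    have hgu : g u = 1 := by
      rw [hg]
      simp only [LinearMap.comp_apply, hu]
      simp [Basis.coord_apply]
    rw [hgsum u] at hgu
    simp only [hczero, mul_zero, Finset.sum_const_zero] at hgu
    exact zero_ne_one hgu
  have hrn := LinearMap.finrank_range_add_finrank_ker Φ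
  rw [hsurj, finrank_top, Module.finrank_pi, Fintype.card_coe, hker, hW] at hrn
  omega

lemma aux_numeric_k2 {n : ℕ} (hn : 6 ≤ n) :
    n * Nat.choose 3 2 < 2 * (Nat.choose (n-2) 0 + Nat.choose (n-1) 2) := by
  induction n, hn using Nat.le_induction with
  | base => decide
  | succ n hn ih =>
    have h1 : Nat.choose n 2 = Nat.choose (n-1) 1 + Nat.choose (n-1) 2 := by
      have := Nat.choose_succ_succ' (n-1) 1
      rwa [show n-1+1 = n by omega] at this
    have h2 : Nat.choose (n-1) 1 = n - 1 := Nat.choose_one_right _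
    simp only [Nat.choose_zero_right, show Nat.choose 3 2 = 3 from rfl] at ih ⊢
    rw [show n+1-1 = n by omega, h1, h2]
    omega

lemma aux_numeric_k3 {k n : ℕ} (hk : 3 ≤ k) (hn : 2 * k + 1 ≤ n) :
    n * Nat.choose (2*k-1) k < k * (Nat.choose (n-2) (k-2) + Nat.choose (n-1) k) := by
  obtain ⟨a, rfl⟩ : ∃ a, k = a + 3 := ⟨k - 3, by omega⟩
  rw [show 2*(a+3)-1 = 2*a+5 by omega, show a+3-2 = a+1 by omega]
  have hCsymm : Nat.choose (2*a+5) (a+2) = Nat.choose (2*a+5) (a+3) := by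
    have := Nat.choose_symm (n := 2*a+5) (k := a+3) (by omega)
    rwa [show 2*a+5-(a+3) = a+2 by omega] at this
  have hkey : Nat.choose (2*a+5) (a+3) < (a+3) * Nat.choose (2*a+5) (a+1) := by
    have hid := Nat.choose_succ_right_eq (2*a+5) (a+1)
    rw [show 2*a+5-(a+1) = a+4 by omega, show a+1+1 = a+2 by ring] at hid
    have hD : 0 < Nat.choose (2*a+5) (a+1) := Nat.choose_pos (by omega)
    have h3 : Nat.choose (2*a+5) (a+3) * (a+2) < ((a+3) * Nat.choose (2*a+5) (a+1)) * (a+2) := by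
      rw [← hCsymm, hid]
      have h4 : a + 4 < (a+3)*(a+2) := by nlinarith
      calc Nat.choose (2*a+5) (a+1) * (a+4)
          < Nat.choose (2*a+5) (a+1) * ((a+3)*(a+2)) := mul_lt_mul_of_pos_left h4 hD
        _ = ((a+3) * Nat.choose (2*a+5) (a+1)) * (a+2) := by ring
    exact Nat.lt_of_mul_lt_mul_right h3
  induction n, hn using Nat.le_induction with
  | base =>
    rw [show 2*(a+3)+1-2 = 2*a+5 by omega, show 2*(a+3)+1-1 = 2*a+6 by omega]
    have hpas : Nat.choose (2*a+6) (a+3) =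
        Nat.choose (2*a+5) (a+2) + Nat.choose (2*a+5) (a+3) := by
      have := Nat.choose_succ_succ' (2*a+5) (a+2)
      rwa [show 2*a+5+1 = 2*a+6 by ring, show a+2+1 = a+3 by ring] at this
    rw [hpas, hCsymm]
    nlinarith [hkey]
  | succ n hn ih =>
    rw [show n+1-2 = n-1 by omega, show n+1-1 = n by omega]
    have hpas : Nat.choose n (a+3) = Nat.choose (n-1) (a+2) + Nat.choose (n-1) (a+3) := by
      have := Nat.choose_succ_succ' (n-1) (a+2)
      rwa [show n-1+1 = n by omega, show a+2+1 = a+3 by ring] at this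
    have hmono1 : Nat.choose (n-2) (a+1) ≤ Nat.choose (n-1) (a+1) :=
      Nat.choose_le_choose _ (by omega)
    have hmono2 : Nat.choose (2*a+5) (a+2) ≤ Nat.choose (n-1) (a+2) :=
      Nat.choose_le_choose _ (by omega)
    rw [hpas]
    rw [hCsymm] at hmono2
    nlinarith [ih, hmono1, hmono2]

/-- Let `W` be `2k`-dimensional, `x` a `(2k)`-independent family of `n`
vectors of `W` and `y` a `(2k)`-independent family of `n` functionals with kernels `U_i`,
such that every `U_i` is spanned by a subset of `X` and every line `⟨x i⟩` is the
intersection of some of the `U_j`. Then `|J_k(X) ∩ J*_k(Y)| < a(n,k) = C(n-2,k-2) + C(n-1,k)`. -/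
theorem card_inter_lt
    {K W : Type*} [DivisionRing K] [AddCommGroup W] [Module K W]
    [FiniteDimensional K W] (n k : ℕ) (hk : 2 ≤ k) (hn : 2 * k < n)
    (hW : Module.finrank K W = 2 * k)
    (x : Fin n → W) (hxinj : Function.Injective x) (hx : MIndep K (2 * k) x)
    (y : Fin n → (W →ₗ[K] K)) (hyinj : Function.Injective y)
    (hy : MIndep Kᵐᵒᵖ (2 * k) y)
    (hker : ∀ i, ∃ A : Finset (Fin n),
      LinearMap.ker (y i) = Submodule.span K (x '' ↑A))
    (hline : ∀ i, ∃ T : Finset (Fin n),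
      Submodule.span K {x i} = ⨅ j ∈ T, LinearMap.ker (y j)) :
    (JkSet K k x ∩ JStarSet K k y).ncard <
      Nat.choose (n - 2) (k - 2) + Nat.choose (n - 1) k := by
  classical
  have h2kn : 2 * k ≤ n := hn.le
  have hPinf : ∀ S : Finset (Fin n), S.card ≤ 2*k →
      finrank K ((⨅ j ∈ S, LinearMap.ker (y j) : Submodule K W)) = 2*k - S.card :=
    fun S hS => aux_finrank_iInf hW (aux_mindep_restrict hy h2kn hS)
  have hxne : ∀ i, x i ≠ 0 := by
    intro i
    have hli := aux_mindep_restrict hx h2kn (A := {i})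
      (by rw [Finset.card_singleton]; omega)
    exact hli.ne_zero ⟨i, by simp⟩
  set Z : Fin n → Finset (Fin n) := fun j => Finset.univ.filter (fun i => y j (x i) = 0)
    with hZdef
  set Rw : Fin n → Finset (Fin n) := fun i => Finset.univ.filter (fun j => y j (x i) = 0)
    with hRdef
  have hZmem : ∀ i j, i ∈ Z j ↔ y j (x i) = 0 := by intro i j; simp [hZdef]
  have hRmem : ∀ i j, j ∈ Rw i ↔ y j (x i) = 0 := by intro i j; simp [hRdef]
  have hker1 : ∀ j, finrank K (LinearMap.ker (y j)) = 2*k - 1 := by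
    intro j
    have h := hPinf {j} (by rw [Finset.card_singleton]; omega)
    rw [show (⨅ j' ∈ ({j} : Finset (Fin n)), LinearMap.ker (y j')) = LinearMap.ker (y j) by
      simp] at h
    simpa using h
  have hZcard : ∀ j, (Z j).card = 2*k - 1 := by
    intro j
    have hle : (Z j).card ≤ 2*k-1 := by
      have h := aux_card_le_finrank hx h2kn (p := LinearMap.ker (y j))
        (by rw [hker1]; omega)
        (A := Z j) (fun i hi => by
          rw [LinearMap.mem_ker]; exact (hZmem i j).mp hi)
      rwa [hker1] at h
    have hge : 2*k-1 ≤ (Z j).card := by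
      obtain ⟨A, hA⟩ := hker j
      have hAZ : A ⊆ Z j := by
        intro a ha
        rw [hZmem]
        have : x a ∈ LinearMap.ker (y j) := by
          rw [hA]; exact subset_span ⟨a, ha, rfl⟩
        rwa [LinearMap.mem_ker] at this
      have hsp1 : span K (x '' ↑(Z j)) ≤ LinearMap.ker (y j) := span_le.mpr (by
        rintro w ⟨i, hi, rfl⟩
        rw [SetLike.mem_coe, LinearMap.mem_ker]
        exact (hZmem i j).mp (by exact_mod_cast hi))
      have hsp2 : LinearMap.ker (y j) ≤ span K (x '' ↑(Z j)) := by
        rw [hA]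
        exact span_mono (Set.image_mono (by exact_mod_cast hAZ))
      have hspeq : span K (x '' ↑(Z j)) = LinearMap.ker (y j) := le_antisymm hsp1 hsp2
      have h1 : finrank K (span K (x '' ↑(Z j))) = 2*k-1 := by rw [hspeq, hker1]
      have h2 : x '' ↑(Z j) = ↑((Z j).image x) := (Finset.coe_image).symm
      have h3 : finrank K (span K (x '' ↑(Z j))) ≤ ((Z j).image x).card := by
        rw [h2]
        exact finrank_span_finset_le_card _
      have h4 : ((Z j).image x).card ≤ (Z j).card := Finset.card_image_le
      omega
    omega
  have hRcard : ∀ i, (Rw i).card = 2*k - 1 := by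
    intro i
    have hle : (Rw i).card ≤ 2*k-1 := by
      by_contra h
      push_neg at h
      obtain ⟨S, hSR, hS⟩ := Finset.exists_subset_card_eq (s := Rw i) (n := 2*k) (by omega)
      have h0 := hPinf S (by omega)
      rw [hS] at h0
      have hbot : (⨅ j ∈ S, LinearMap.ker (y j) : Submodule K W) = ⊥ := by
        have : finrank K ((⨅ j ∈ S, LinearMap.ker (y j) : Submodule K W)) = 0 := by omega
        exact Submodule.finrank_eq_zero.mp this
      have hxmem : x i ∈ (⨅ j ∈ S, LinearMap.ker (y j) : Submodule K W) := by
        simp only [Submodule.mem_iInf]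
        intro j hj
        rw [LinearMap.mem_ker]
        exact (hRmem i j).mp (hSR hj)
      rw [hbot] at hxmem
      exact hxne i (by simpa using hxmem)
    have hge : 2*k-1 ≤ (Rw i).card := by
      by_contra h
      push_neg at h
      obtain ⟨T, hT⟩ := hline i
      have hTR : T ⊆ Rw i := by
        intro j hj
        rw [hRmem]
        have : x i ∈ (⨅ j' ∈ T, LinearMap.ker (y j') : Submodule K W) := by
          rw [← hT]; exact mem_span_singleton_self _
        simp only [Submodule.mem_iInf] at this
        exact LinearMap.mem_ker.mp (this j hj)
      have hTcard : T.card ≤ 2*k-2 := le_trans (Finset.card_le_card hTR) (by omega)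
      have h0 := hPinf T (by omega)
      rw [← hT] at h0
      have h1 : finrank K (span K ({x i} : Set W)) = 1 := finrank_span_singleton (hxne i)
      omega
    omega
  set Pinf : Finset (Fin n) → Submodule K W := fun B => ⨅ j ∈ B, LinearMap.ker (y j)
    with hPinfdef
  set 𝓑 : Finset (Finset (Fin n)) := (Finset.univ.powersetCard k).filter
      (fun B => ∃ A : Finset (Fin n), A.card = k ∧ span K (x '' ↑A) = Pinf B) with h𝓑
  have hBk : ∀ B ∈ 𝓑, B.card = k := fun B hB =>
    (Finset.mem_powersetCard.mp (Finset.mem_filter.mp hB).1).2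
  have hNle : (JkSet K k x ∩ JStarSet K k y).ncard ≤ 𝓑.card := by
    set f : Submodule K W → Finset (Fin n) := fun P =>
      if h : P ∈ JStarSet K k y then h.choose else ∅ with hf
    have hmaps : ∀ P ∈ JkSet K k x ∩ JStarSet K k y, f P ∈ (↑𝓑 : Set (Finset (Fin n))) := by
      rintro P ⟨hP1, hP2⟩
      obtain ⟨A, hA1, hA2⟩ := hP1
      rw [hf]
      simp only [hP2, dif_pos]
      obtain ⟨hc1, hc2⟩ := hP2.choose_spec
      refine Finset.mem_coe.mpr (Finset.mem_filter.mpr ⟨Finset.mem_powersetCard.mpr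
        ⟨Finset.subset_univ _, hc1⟩, A, hA1, ?_⟩)
      show span K (x '' ↑A) = (⨅ j ∈ hP2.choose, LinearMap.ker (y j) : Submodule K W)
      rw [← hA2, ← hc2]
    have hinj : Set.InjOn f (JkSet K k x ∩ JStarSet K k y) := by
      rintro P ⟨_, hP2⟩ Q ⟨_, hQ2⟩ hfPQ
      rw [hf] at hfPQ
      simp only [hP2, hQ2, dif_pos] at hfPQ
      rw [hP2.choose_spec.2, hQ2.choose_spec.2, hfPQ]
    have hfin : (↑𝓑 : Set (Finset (Fin n))).Finite := 𝓑.finite_toSet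
    have := Set.ncard_le_ncard_of_injOn f hmaps hinj hfin
    rwa [Set.ncard_coe_finset] at this
  set ZB : Finset (Fin n) → Finset (Fin n) := fun B =>
    Finset.univ.filter (fun i => x i ∈ Pinf B) with hZB
  have hfrB : ∀ B ∈ 𝓑, finrank K (Pinf B) = k := by
    intro B hB
    have h := hPinf B (by rw [hBk B hB]; omega)
    rw [hBk B hB] at h
    show finrank K ((⨅ j ∈ B, LinearMap.ker (y j) : Submodule K W)) = k
    omega
  have hZBspec : ∀ B ∈ 𝓑, (ZB B).card = k ∧ span K (x '' ↑(ZB B)) = Pinf B := by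
    intro B hB
    obtain ⟨A, hAcard, hAspan⟩ := (Finset.mem_filter.mp hB).2
    have hAsub : A ⊆ ZB B := by
      intro a ha
      simp only [hZB, Finset.mem_filter, Finset.mem_univ, true_and]
      rw [← hAspan]
      exact subset_span ⟨a, ha, rfl⟩
    have hle : (ZB B).card ≤ k := by
      have h := aux_card_le_finrank hx h2kn (p := Pinf B)
        (by rw [hfrB B hB]; omega)
        (A := ZB B) (fun i hi => by
          simpa [hZB] using hi)
      rwa [hfrB B hB] at h
    have hcard : (ZB B).card = k := le_antisymm hle (by
      calc k = A.card := hAcard.symm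
        _ ≤ (ZB B).card := Finset.card_le_card hAsub)
    have hAeq : A = ZB B := Finset.eq_of_subset_of_card_le hAsub (by omega)
    exact ⟨hcard, by rw [← hAeq, hAspan]⟩
  have hZBinj : ∀ B ∈ 𝓑, ∀ B' ∈ 𝓑, ZB B = ZB B' → B = B' := by
    intro B hB B' hB' hZeq
    have h1 : Pinf B = Pinf B' := by
      rw [← (hZBspec B hB).2, ← (hZBspec B' hB').2, hZeq]
    have hcardU : (B ∪ B').card ≤ 2*k :=
      le_trans (Finset.card_union_le _ _) (by rw [hBk B hB, hBk B' hB']; omega)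
    have hPU : Pinf (B ∪ B') = Pinf B := by
      show (⨅ j ∈ B ∪ B', LinearMap.ker (y j) : Submodule K W) = _
      rw [Finset.iInf_union]
      show Pinf B ⊓ Pinf B' = Pinf B
      rw [h1, inf_idem]
    have hfrU : finrank K (Pinf (B ∪ B')) = 2*k - (B ∪ B').card := hPinf (B ∪ B') hcardU
    rw [hPU] at hfrU
    have hfrB2 := hfrB B hB
    have hUcard : (B ∪ B').card = k := by omega
    have hBU : B = B ∪ B' :=
      Finset.eq_of_subset_of_card_le Finset.subset_union_left (by rw [hUcard, hBk B hB])
    have hB'U : B' = B ∪ B' :=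
      Finset.eq_of_subset_of_card_le Finset.subset_union_right (by rw [hUcard, hBk B' hB'])
    exact hBU.trans hB'U.symm
  have hZBsub : ∀ B ∈ 𝓑, ∀ j ∈ B, ZB B ⊆ Z j := by
    intro B hB j hj i hi
    have hx_i : x i ∈ Pinf B := by simpa [hZB] using hi
    have hle : Pinf B ≤ LinearMap.ker (y j) := biInf_le _ hj
    rw [hZmem]
    exact LinearMap.mem_ker.mp (hle hx_i)
  have hcount : 𝓑.card * k = ∑ j : Fin n, (𝓑.filter (fun B => j ∈ B)).card := by
    have h1 : ∀ B : Finset (Fin n), B.card = ∑ j : Fin n, if j ∈ B then 1 else 0 := by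
      intro B
      rw [Finset.sum_ite_mem, Finset.univ_inter, Finset.sum_const, smul_eq_mul, mul_one]
    calc 𝓑.card * k = ∑ _B ∈ 𝓑, k := by rw [Finset.sum_const, smul_eq_mul]
      _ = ∑ B ∈ 𝓑, B.card := Finset.sum_congr rfl (fun B hB => (hBk B hB).symm)
      _ = ∑ B ∈ 𝓑, ∑ j : Fin n, (if j ∈ B then 1 else 0) :=
          Finset.sum_congr rfl (fun B _ => h1 B)
      _ = ∑ j : Fin n, ∑ B ∈ 𝓑, (if j ∈ B then 1 else 0) := Finset.sum_comm
      _ = ∑ j : Fin n, (𝓑.filter (fun B => j ∈ B)).card :=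
          Finset.sum_congr rfl (fun j _ => (Finset.card_filter _ _).symm)
  by_cases h25 : k = 2 ∧ n = 5
  · -- special case k = 2, n = 5
    obtain ⟨hk2, hn5⟩ := h25
    subst hk2; subst hn5
    have hpair_le : ∀ j j' : Fin 5, j ≠ j' → (Z j ∩ Z j').card ≤ 2 := by
      intro j j' hne
      have hS : ({j, j'} : Finset (Fin 5)).card = 2 := by
        rw [Finset.card_insert_of_notMem (by simpa using hne), Finset.card_singleton]
      have hfr := hPinf {j, j'} (by omega)
      rw [hS] at hfr
      have h := aux_card_le_finrank hx h2kn
        (p := (⨅ j'' ∈ ({j, j'} : Finset (Fin 5)), LinearMap.ker (y j'') : Submodule K W))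
        (by rw [hfr]; omega)
        (A := Z j ∩ Z j') (fun i hi => by
          simp only [Submodule.mem_iInf]
          intro j'' hj''
          rw [LinearMap.mem_ker]
          rcases Finset.mem_insert.mp hj'' with h' | h'
          · subst h'; exact (hZmem i j'').mp (Finset.mem_inter.mp hi).1
          · have h'' := Finset.mem_singleton.mp h'
            subst h''; exact (hZmem i j'').mp (Finset.mem_inter.mp hi).2)
      rw [hfr] at h
      omega
    have hpair_ge : ∀ j j' : Fin 5, 1 ≤ (Z j ∩ Z j').card := by
      intro j j'
      have h1 := hZcard j; have h2 := hZcard j'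
      have h3 := Finset.card_inter_add_card_union (Z j) (Z j')
      have hun : (Z j ∪ Z j').card ≤ 5 :=
        le_trans (Finset.card_le_univ _) (by simp)
      omega
    have hdc : ∀ j : Fin 5, ∑ j' ∈ Finset.univ.erase j, (Z j ∩ Z j').card = 6 := by
      intro j
      have h1 : ∀ j', (Z j ∩ Z j').card = ∑ i ∈ Z j, if i ∈ Z j' then 1 else 0 := by
        intro j'
        have hZZ : Z j ∩ Z j' = (Z j).filter (fun i => i ∈ Z j') := by
          ext i
          simp [Finset.mem_filter]
        rw [hZZ, Finset.card_filter]
      calc ∑ j' ∈ Finset.univ.erase j, (Z j ∩ Z j').card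
          = ∑ j' ∈ Finset.univ.erase j, ∑ i ∈ Z j, (if i ∈ Z j' then 1 else 0) :=
            Finset.sum_congr rfl (fun j' _ => h1 j')
        _ = ∑ i ∈ Z j, ∑ j' ∈ Finset.univ.erase j, (if i ∈ Z j' then 1 else 0) :=
            Finset.sum_comm
        _ = ∑ i ∈ Z j, ((Finset.univ.erase j).filter (fun j' => i ∈ Z j')).card :=
            Finset.sum_congr rfl (fun i _ => (Finset.card_filter _ _).symm)
        _ = ∑ _i ∈ Z j, 2 := by
            refine Finset.sum_congr rfl (fun i hi => ?_)
            have he : (Finset.univ.erase j).filter (fun j' => i ∈ Z j') = (Rw i).erase j := by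
              ext j''
              simp only [Finset.mem_filter, Finset.mem_erase, Finset.mem_univ, and_true,
                true_and]
              exact and_congr_right (fun _ => (hZmem i j'').trans ((hRmem i j'').symm))
            have hmem' : j ∈ Rw i := by rw [hRmem]; exact (hZmem i j).mp hi
            rw [he, Finset.card_erase_of_mem hmem', hRcard i]
        _ = 6 := by
            rw [Finset.sum_const, hZcard j]
            norm_num
    have hdeg : ∀ j : Fin 5,
        ((Finset.univ.erase j).filter (fun j' => 2 ≤ (Z j ∩ Z j').card)).card ≤ 2 := by
      intro j
      have hsum := hdc j
      have hEcard : (Finset.univ.erase j).card = 4 := by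
        rw [Finset.card_erase_of_mem (Finset.mem_univ j)]
        simp
      have hsplit : ∑ j' ∈ Finset.univ.erase j, (Z j ∩ Z j').card
          = ∑ j' ∈ Finset.univ.erase j, (((Z j ∩ Z j').card - 1) + 1) :=
        Finset.sum_congr rfl (fun j' _ => by have := hpair_ge j j'; omega)
      rw [hsplit, Finset.sum_add_distrib, Finset.sum_const, hEcard, smul_eq_mul,
        mul_one] at hsum
      have hle2 : ((Finset.univ.erase j).filter (fun j' => 2 ≤ (Z j ∩ Z j').card)).card
          ≤ ∑ j' ∈ Finset.univ.erase j, ((Z j ∩ Z j').card - 1) := by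
        calc ((Finset.univ.erase j).filter (fun j' => 2 ≤ (Z j ∩ Z j').card)).card
            = ∑ _j' ∈ (Finset.univ.erase j).filter (fun j' => 2 ≤ (Z j ∩ Z j').card), 1 :=
              by rw [Finset.sum_const, smul_eq_mul, mul_one]
          _ ≤ ∑ j' ∈ (Finset.univ.erase j).filter (fun j' => 2 ≤ (Z j ∩ Z j').card),
                ((Z j ∩ Z j').card - 1) :=
              Finset.sum_le_sum (fun j' hj' => by
                have := (Finset.mem_filter.mp hj').2; omega)
          _ ≤ ∑ j' ∈ Finset.univ.erase j, ((Z j ∩ Z j').card - 1) :=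
              Finset.sum_le_sum_of_subset (Finset.filter_subset _ _)
      omega
    have hfiber2 : ∀ j : Fin 5, (𝓑.filter (fun B => j ∈ B)).card ≤ 2 := by
      intro j
      set f : Finset (Fin 5) → Fin 5 := fun B =>
        if h : (B.erase j).Nonempty then (B.erase j).min' h else j with hfdef
      have hkey : ∀ B ∈ 𝓑.filter (fun B => j ∈ B), f B ∈ B.erase j ∧ B = insert j {f B} := by
        intro B hB
        obtain ⟨hB𝓑, hjB⟩ := Finset.mem_filter.mp hB
        have hcB : B.card = 2 := hBk B hB𝓑
        have hcerase : (B.erase j).card = 1 := by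
          rw [Finset.card_erase_of_mem hjB, hcB]
        obtain ⟨a, ha⟩ := Finset.card_eq_one.mp hcerase
        have hne : (B.erase j).Nonempty := by rw [ha]; exact ⟨a, Finset.mem_singleton_self a⟩
        have hfmem : f B ∈ B.erase j := by
          rw [hfdef]; simp only [hne, dif_pos]; exact Finset.min'_mem _ _
        have hfB : f B = a := Finset.mem_singleton.mp (ha ▸ hfmem)
        refine ⟨hfmem, ?_⟩
        rw [hfB]
        have h5 : insert j (B.erase j) = B := Finset.insert_erase hjB
        rw [ha] at h5
        exact h5.symm
      have hmaps : ∀ B ∈ 𝓑.filter (fun B => j ∈ B),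
          f B ∈ (Finset.univ.erase j).filter (fun j' => 2 ≤ (Z j ∩ Z j').card) := by
        intro B hB
        obtain ⟨hB𝓑, hjB⟩ := Finset.mem_filter.mp hB
        obtain ⟨hmem, _⟩ := hkey B hB
        have hfne : f B ≠ j := (Finset.mem_erase.mp hmem).1
        have hfB : f B ∈ B := Finset.erase_subset _ _ hmem
        refine Finset.mem_filter.mpr ⟨Finset.mem_erase.mpr ⟨hfne, Finset.mem_univ _⟩, ?_⟩
        have hsub : ZB B ⊆ Z j ∩ Z (f B) :=
          Finset.subset_inter (hZBsub B hB𝓑 j hjB) (hZBsub B hB𝓑 (f B) hfB)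
        calc 2 = (ZB B).card := ((hZBspec B hB𝓑).1).symm
          _ ≤ (Z j ∩ Z (f B)).card := Finset.card_le_card hsub
      have hinj : ∀ B ∈ 𝓑.filter (fun B => j ∈ B), ∀ B' ∈ 𝓑.filter (fun B => j ∈ B),
          f B = f B' → B = B' := by
        intro B hB B' hB' hff
        rw [(hkey B hB).2, (hkey B' hB').2, hff]
      exact le_trans (Finset.card_le_card_of_injOn f hmaps hinj) (hdeg j)
    have h10 : 𝓑.card * 2 ≤ 10 := by
      rw [hcount]
      calc ∑ j : Fin 5, (𝓑.filter (fun B => j ∈ B)).card ≤ ∑ _j : Fin 5, 2 :=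
            Finset.sum_le_sum (fun j _ => hfiber2 j)
        _ = 10 := by simp
    have h7 : Nat.choose (5-2) (2-2) + Nat.choose (5-1) 2 = 7 := rfl
    rw [h7]
    omega
  · -- general case
    have hfiber : ∀ j, (𝓑.filter (fun B => j ∈ B)).card ≤ Nat.choose (2*k-1) k := by
      intro j
      have hmaps : ∀ B ∈ 𝓑.filter (fun B => j ∈ B), ZB B ∈ (Z j).powersetCard k := by
        intro B hB
        obtain ⟨hB𝓑, hjB⟩ := Finset.mem_filter.mp hB
        exact Finset.mem_powersetCard.mpr ⟨hZBsub B hB𝓑 j hjB, (hZBspec B hB𝓑).1⟩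
      have hinj : ∀ B ∈ 𝓑.filter (fun B => j ∈ B), ∀ B' ∈ 𝓑.filter (fun B => j ∈ B),
          ZB B = ZB B' → B = B' := fun B hB B' hB' h =>
        hZBinj B (Finset.mem_filter.mp hB).1 B' (Finset.mem_filter.mp hB').1 h
      calc (𝓑.filter (fun B => j ∈ B)).card ≤ ((Z j).powersetCard k).card :=
            Finset.card_le_card_of_injOn ZB hmaps hinj
        _ = Nat.choose (2*k-1) k := by rw [Finset.card_powersetCard, hZcard j]
    have hmain : 𝓑.card * k ≤ n * Nat.choose (2*k-1) k := by
      rw [hcount]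
      calc ∑ j : Fin n, (𝓑.filter (fun B => j ∈ B)).card
          ≤ ∑ _j : Fin n, Nat.choose (2*k-1) k := Finset.sum_le_sum (fun j _ => hfiber j)
        _ = n * Nat.choose (2*k-1) k := by
            rw [Finset.sum_const, Finset.card_univ, Fintype.card_fin, smul_eq_mul]
    have hnum : n * Nat.choose (2*k-1) k
        < k * (Nat.choose (n-2) (k-2) + Nat.choose (n-1) k) := by
      rcases Nat.lt_or_ge k 3 with hk3 | hk3
      · have hk2 : k = 2 := by omega
        subst hk2
        have hn6 : 6 ≤ n := by
          rcases Nat.lt_or_ge n 6 with h | h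
          · exact absurd ⟨rfl, by omega⟩ h25
          · exact h
        have h := aux_numeric_k2 hn6
        rw [show 2*2-1 = 3 from rfl, show 2-2 = 0 from rfl]
        exact h
      · exact aux_numeric_k3 hk3 (by omega)
    have h𝓑lt : 𝓑.card < Nat.choose (n-2) (k-2) + Nat.choose (n-1) k := by
      have hlt : 𝓑.card * k < (Nat.choose (n-2) (k-2) + Nat.choose (n-1) k) * k := by
        rw [mul_comm (Nat.choose (n-2) (k-2) + Nat.choose (n-1) k) k]
        exact lt_of_le_of_lt hmain hnum
      exact Nat.lt_of_mul_lt_mul_right hlt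
    exact lt_of_le_of_lt hNle h𝓑lt
end

section
/- Let V be an n-dimensional left vector space over a division ring R with n = 2k and k ≥ 2, let V' be an n'-dimensional left vector space over a division ring R' with k ≤ k' and k ≤ n'−k', and let f be a J-mapping of G_k(V) to G_{k'}(V'). Then there exists a (k'−k)-dimensional subspace S of V' such that S ⊆ f(P) for every P ∈ G_k(V). -/
open Submodule Set Function Module

/-- The Grassmannian of `k`-dimensional subspaces of `V`. -/
def Grass (R V : Type*) [DivisionRing R] [AddCommGroup V] [Module R V] (k : ℕ) : Type _ :=
  {P : Submodule R V // Module.finrank R ↥P = k}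

/-- The Grassmann graph `Γ_k(V)`: two `k`-dimensional subspaces are adjacent iff their
intersection is `(k-1)`-dimensional. -/
def grassGraph (R V : Type*) [DivisionRing R] [AddCommGroup V] [Module R V] (k : ℕ) :
    SimpleGraph (Grass R V k) where
  Adj P Q := P ≠ Q ∧ Module.finrank R ↥(P.1 ⊓ Q.1) = k - 1
  symm := by
    constructor
    intro P Q h
    exact ⟨h.1.symm, by rw [inf_comm]; exact h.2⟩
  loopless := by
    constructor
    intro P h
    exact h.1 rfl

/-- Vertices of the Johnson graph: `k`-element subsets of `{1, …, n}`. -/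
abbrev JVertex (n k : ℕ) := {A : Finset (Fin n) // A.card = k}

/-- The Johnson graph `J(n,k)`: two `k`-element subsets are adjacent iff their
intersection has `k-1` elements. -/
def johnsonGraph (n k : ℕ) : SimpleGraph (JVertex n k) where
  Adj A B := A ≠ B ∧ (A.1 ∩ B.1).card = k - 1
  symm := by
    constructor
    intro A B h
    exact ⟨h.1.symm, by rw [Finset.inter_comm]; exact h.2⟩
  loopless := by
    constructor
    intro A h
    exact h.1 rfl

/-- Apartments of `G_k(V)`: the sets of `k`-dimensional subspaces spanned by subsets
of a base of the `n`-dimensional space `V`. -/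
def IsApartment (R V : Type*) [DivisionRing R] [AddCommGroup V] [Module R V]
    (n k : ℕ) (𝒜 : Set (Grass R V k)) : Prop :=
  ∃ b : Basis (Fin n) R V, 𝒜 = {P : Grass R V k | P.1 ∈ JkSet R k ⇑b}

/-- A `J(n,k)`-subset of `G_{k'}(V')`: the image of an isometric embedding of the Johnson
graph `J(n,k)` in the Grassmann graph `Γ_{k'}(V')`. -/
def IsJSubset (R' V' : Type*) [DivisionRing R'] [AddCommGroup V'] [Module R' V']
    (n k k' : ℕ) (J : Set (Grass R' V' k')) : Prop :=
  ∃ g : JVertex n k → Grass R' V' k',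
    Function.Injective g ∧
    (∀ A B : JVertex n k,
      (grassGraph R' V' k').dist (g A) (g B) = (johnsonGraph n k).dist A B) ∧
    Set.range g = J

/-- A `J`-mapping: a mapping transferring every apartment of `G_k(V)` to a
`J(n,k)`-subset of `G_{k'}(V')`. -/
def IsJMapping (R V R' V' : Type*) [DivisionRing R] [AddCommGroup V] [Module R V]
    [DivisionRing R'] [AddCommGroup V'] [Module R' V'] (n k k' : ℕ)
    (f : Grass R V k → Grass R' V' k') : Prop :=
  ∀ 𝒜 : Set (Grass R V k), IsApartment R V n k 𝒜 → IsJSubset R' V' n k k' (f '' 𝒜)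

section Aux
variable {K W : Type*} [DivisionRing K] [AddCommGroup W] [Module K W] [FiniteDimensional K W]

lemma my_finrank_sup_span_singleton (Z : Submodule K W) (y : W) (hy : y ∉ Z) :
    finrank K ↥(Z ⊔ span K {y}) = finrank K ↥Z + 1 := by
  have hbot : Z ⊓ span K {y} = ⊥ := by
    rw [eq_bot_iff]
    rintro v ⟨hv1, hv2⟩
    rcases mem_span_singleton.1 hv2 with ⟨c, rfl⟩
    rcases eq_or_ne c 0 with rfl | hc
    · simp
    · have : c⁻¹ • c • y ∈ Z := Z.smul_mem c⁻¹ hv1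
      rw [smul_smul, inv_mul_cancel₀ hc, one_smul] at this
      exact absurd this hy
  have hy0 : y ≠ 0 := fun h => hy (h ▸ Z.zero_mem)
  have h1 : finrank K ↥(span K ({y} : Set W)) = 1 := finrank_span_singleton hy0
  have := Submodule.finrank_sup_add_finrank_inf_eq Z (span K {y})
  rw [hbot] at this
  simp only [finrank_bot] at this
  omega

lemma my_exists_intermediate (Z X : Submodule K W) (hZX : Z ≤ X) (r : ℕ)
    (h1 : finrank K ↥Z ≤ r) (h2 : r ≤ finrank K ↥X) :
    ∃ W₁ : Submodule K W, Z ≤ W₁ ∧ W₁ ≤ X ∧ finrank K ↥W₁ = r := by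
  induction r with
  | zero =>
    have : finrank K ↥Z = 0 := Nat.le_zero.1 h1
    exact ⟨Z, le_rfl, hZX, this⟩
  | succ r ih =>
    rcases Nat.lt_or_ge r (finrank K ↥Z) with hr | hr
    · have : finrank K ↥Z = r + 1 := le_antisymm h1 hr
      exact ⟨Z, le_rfl, hZX, this⟩
    · obtain ⟨W₁, hZW, hWX, hW⟩ := ih hr (le_of_lt h2)
      have hne : ¬ X ≤ W₁ := fun h => by
        have := Submodule.finrank_mono h
        omega
      obtain ⟨x, hxX, hxW⟩ := SetLike.exists_of_lt (lt_of_le_of_ne hWX (fun h => hne (h ▸ le_rfl)))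
      refine ⟨W₁ ⊔ span K {x}, le_trans hZW le_sup_left, ?_, ?_⟩
      · exact sup_le hWX ((span_singleton_le_iff_mem x X).2 hxX)
      · rw [my_finrank_sup_span_singleton W₁ x hxW, hW]

end Aux
section GrassDist
variable {K W : Type*} [DivisionRing K] [AddCommGroup W] [Module K W] [FiniteDimensional K W] {q : ℕ}

lemma grass_eq_of_finrank_zero (X Y : Grass K W 0) : X = Y := by
  apply Subtype.ext
  rw [Submodule.finrank_eq_zero.1 X.2, Submodule.finrank_eq_zero.1 Y.2]

lemma grass_adj_finrank_le {X X₁ : Grass K W q} (h : (grassGraph K W q).Adj X X₁)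
    (Z : Submodule K W) : finrank K ↥(X₁.1 ⊓ Z) ≤ finrank K ↥(X.1 ⊓ Z) + 1 := by
  rcases Nat.eq_zero_or_pos q with rfl | hq
  · exact absurd (grass_eq_of_finrank_zero X X₁) h.1
  have key := Submodule.finrank_sup_add_finrank_inf_eq (X₁.1 ⊓ Z) (X.1 ⊓ X₁.1)
  have h1 : finrank K ↥((X₁.1 ⊓ Z) ⊔ (X.1 ⊓ X₁.1)) ≤ q := by
    have hle : (X₁.1 ⊓ Z) ⊔ (X.1 ⊓ X₁.1) ≤ X₁.1 := sup_le inf_le_left inf_le_right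
    calc finrank K ↥((X₁.1 ⊓ Z) ⊔ (X.1 ⊓ X₁.1)) ≤ finrank K ↥X₁.1 := Submodule.finrank_mono hle
    _ = q := X₁.2
  have h2 : (X₁.1 ⊓ Z) ⊓ (X.1 ⊓ X₁.1) ≤ X.1 ⊓ Z := by
    refine le_inf (le_trans inf_le_right inf_le_left) (le_trans inf_le_left inf_le_right)
  have h3 := Submodule.finrank_mono h2
  have h4 : finrank K ↥(X.1 ⊓ X₁.1) = q - 1 := h.2
  omega

lemma grass_walk_ge {X Y : Grass K W q} (p : (grassGraph K W q).Walk X Y) :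
    q ≤ finrank K ↥(X.1 ⊓ Y.1) + p.length := by
  induction p with
  | nil =>
    rename_i u
    have : u.1 ⊓ u.1 = u.1 := inf_idem u.1
    simp only [SimpleGraph.Walk.length_nil, Nat.add_zero]
    rw [this, u.2]
  | cons h p ih =>
    rename_i u v w
    have := grass_adj_finrank_le h w.1
    simp only [SimpleGraph.Walk.length_cons]
    omega

lemma grass_walk_le : ∀ (d : ℕ) (X Y : Grass K W q), q ≤ finrank K ↥(X.1 ⊓ Y.1) + d →
    ∃ p : (grassGraph K W q).Walk X Y, p.length ≤ d := by
  intro d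
  induction d with
  | zero =>
    intro X Y h
    have hXY : X = Y := by
      have h1 : X.1 ⊓ Y.1 = X.1 :=
        eq_of_le_of_finrank_le inf_le_left (by rw [X.2]; omega)
      have h2 : X.1 ≤ Y.1 := by rw [← h1]; exact inf_le_right
      exact Subtype.ext (eq_of_le_of_finrank_le h2 (by rw [X.2, Y.2]))
    subst hXY
    exact ⟨SimpleGraph.Walk.nil, le_rfl⟩
  | succ d ih =>
    intro X Y h
    by_cases hd : q ≤ finrank K ↥(X.1 ⊓ Y.1) + d
    · obtain ⟨p, hp⟩ := ih X Y hd
      exact ⟨p, hp.trans (Nat.le_succ d)⟩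
    push_neg at hd
    have hlt : finrank K ↥(X.1 ⊓ Y.1) < q := by omega
    have hYX : ¬ Y.1 ≤ X.1 := by
      intro hle
      rw [inf_eq_right.mpr hle, Y.2] at hlt
      omega
    rw [SetLike.le_def] at hYX
    push_neg at hYX
    obtain ⟨y, hyY, hyX⟩ := hYX
    obtain ⟨W₁, hZW, hWX, hWr⟩ := my_exists_intermediate (X.1 ⊓ Y.1) X.1 inf_le_left (q - 1)
      (by omega) (by rw [X.2]; omega)
    have hyW : y ∉ W₁ := fun hw => hyX (hWX hw)
    have hfr : finrank K ↥(W₁ ⊔ span K {y}) = q := by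
      rw [my_finrank_sup_span_singleton W₁ y hyW, hWr]; omega
    set X' : Grass K W q := ⟨W₁ ⊔ span K {y}, hfr⟩ with hX'
    have hyX' : y ∈ X'.1 := Submodule.mem_sup_right (mem_span_singleton_self y)
    have hinter : X.1 ⊓ X'.1 = W₁ := by
      apply le_antisymm
      · rintro v ⟨hvX, hvX'⟩
        rcases mem_sup.1 hvX' with ⟨w, hw, z, hz, rfl⟩
        rcases mem_span_singleton.1 hz with ⟨c, rfl⟩
        rcases eq_or_ne c 0 with rfl | hc
        · simpa using hw
        · exfalso
          have hcy : c • y ∈ X.1 := by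
            have : (w + c • y) - w ∈ X.1 := X.1.sub_mem hvX (hWX hw)
            simpa using this
          have : c⁻¹ • c • y ∈ X.1 := X.1.smul_mem _ hcy
          rw [smul_smul, inv_mul_cancel₀ hc, one_smul] at this
          exact hyX this
      · exact le_inf hWX le_sup_left
    have hadj : (grassGraph K W q).Adj X X' := by
      constructor
      · intro heq
        rw [heq] at hyX
        exact hyX hyX'
      · rw [hinter, hWr]
    have hgrow : finrank K ↥(X.1 ⊓ Y.1) + 1 ≤ finrank K ↥(X'.1 ⊓ Y.1) := by
      have hM : (X.1 ⊓ Y.1) ⊔ span K {y} ≤ X'.1 ⊓ Y.1 := by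
        refine sup_le (le_inf (le_trans hZW le_sup_left) inf_le_right)
          (le_inf ((span_singleton_le_iff_mem y _).2 hyX')
            ((span_singleton_le_iff_mem y _).2 hyY))
      have hyXY : y ∉ X.1 ⊓ Y.1 := fun hy => hyX hy.1
      have := Submodule.finrank_mono hM
      rw [my_finrank_sup_span_singleton _ y hyXY] at this
      exact this
    obtain ⟨p, hp⟩ := ih X' Y (by omega)
    exact ⟨SimpleGraph.Walk.cons hadj p, by simpa using Nat.succ_le_succ hp⟩

lemma grass_finrank_le (X Y : Grass K W q) : finrank K ↥(X.1 ⊓ Y.1) ≤ q := by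
  calc finrank K ↥(X.1 ⊓ Y.1) ≤ finrank K ↥X.1 := Submodule.finrank_mono inf_le_left
  _ = q := X.2

lemma grass_dist_eq (X Y : Grass K W q) :
    (grassGraph K W q).dist X Y = q - finrank K ↥(X.1 ⊓ Y.1) := by
  obtain ⟨p, hp⟩ := grass_walk_le (q - finrank K ↥(X.1 ⊓ Y.1)) X Y
    (by have := grass_finrank_le X Y; omega)
  have hle := (SimpleGraph.dist_le p).trans hp
  have hreach : (grassGraph K W q).Reachable X Y := ⟨p⟩
  obtain ⟨p₀, hp₀⟩ := hreach.exists_walk_length_eq_dist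
  have := grass_walk_ge p₀
  omega

end GrassDist
section JohnsonDist
variable {n k : ℕ}

lemma johnson_eq_of_zero (hk : k = 0) (A B : JVertex n k) : A = B := by
  apply Subtype.ext
  rw [Finset.card_eq_zero.1 (A.2.trans hk), Finset.card_eq_zero.1 (B.2.trans hk)]

lemma johnson_adj_card_le {A A₁ : JVertex n k} (h : (johnsonGraph n k).Adj A A₁)
    (B : Finset (Fin n)) : (A₁.1 ∩ B).card ≤ (A.1 ∩ B).card + 1 := by
  rcases Nat.eq_zero_or_pos k with hk | hk
  · exact absurd (johnson_eq_of_zero hk A A₁) h.1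
  have hsub : A₁.1 ∩ B ⊆ (A.1 ∩ B) ∪ (A₁.1 \ A.1) := by
    intro x hx
    rcases Finset.mem_inter.1 hx with ⟨hx1, hx2⟩
    by_cases hxA : x ∈ A.1
    · exact Finset.mem_union_left _ (Finset.mem_inter.2 ⟨hxA, hx2⟩)
    · exact Finset.mem_union_right _ (Finset.mem_sdiff.2 ⟨hx1, hxA⟩)
  have hcard : (A₁.1 \ A.1).card = 1 := by
    have h1 : (A₁.1 ∩ A.1).card + (A₁.1 \ A.1).card = A₁.1.card :=
      Finset.card_inter_add_card_sdiff A₁.1 A.1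
    rw [Finset.inter_comm] at h1
    rw [h.2, A₁.2] at h1
    omega
  calc (A₁.1 ∩ B).card ≤ ((A.1 ∩ B) ∪ (A₁.1 \ A.1)).card := Finset.card_le_card hsub
  _ ≤ (A.1 ∩ B).card + (A₁.1 \ A.1).card := Finset.card_union_le _ _
  _ = (A.1 ∩ B).card + 1 := by rw [hcard]

lemma johnson_walk_ge {A B : JVertex n k} (p : (johnsonGraph n k).Walk A B) :
    k ≤ (A.1 ∩ B.1).card + p.length := by
  induction p with
  | nil =>
    rename_i u
    simp only [SimpleGraph.Walk.length_nil, Nat.add_zero, Finset.inter_self]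
    exact u.2.ge
  | cons h p ih =>
    rename_i u v w
    have := johnson_adj_card_le h w.1
    simp only [SimpleGraph.Walk.length_cons]
    omega

lemma johnson_card_inter_le (A B : JVertex n k) : (A.1 ∩ B.1).card ≤ k := by
  calc (A.1 ∩ B.1).card ≤ A.1.card := Finset.card_le_card Finset.inter_subset_left
  _ = k := A.2

lemma johnson_walk_le : ∀ (d : ℕ) (A B : JVertex n k), k ≤ (A.1 ∩ B.1).card + d →
    ∃ p : (johnsonGraph n k).Walk A B, p.length ≤ d := by
  intro d
  induction d with
  | zero =>
    intro A B h
    have : A.1 = B.1 := by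
      have hsub : A.1 ∩ B.1 ⊆ A.1 := Finset.inter_subset_left
      have h1 : A.1 ∩ B.1 = A.1 :=
        Finset.eq_of_subset_of_card_le hsub (by rw [A.2]; omega)
      have h2 : A.1 ⊆ B.1 := by rw [← h1]; exact Finset.inter_subset_right
      exact Finset.eq_of_subset_of_card_le h2 (by rw [A.2, B.2])
    have hAB : A = B := Subtype.ext this
    subst hAB
    exact ⟨SimpleGraph.Walk.nil, le_rfl⟩
  | succ d ih =>
    intro A B h
    by_cases hd : k ≤ (A.1 ∩ B.1).card + d
    · obtain ⟨p, hp⟩ := ih A B hd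
      exact ⟨p, hp.trans (Nat.le_succ d)⟩
    push_neg at hd
    have hlt : (A.1 ∩ B.1).card < k := by omega
    have hAB : ∃ a, a ∈ A.1 ∧ a ∉ B.1 := by
      by_contra hcon
      push_neg at hcon
      have : A.1 ∩ B.1 = A.1 := Finset.inter_eq_left.2 (fun x hx => hcon x hx)
      rw [this, A.2] at hlt
      omega
    have hBA : ∃ b, b ∈ B.1 ∧ b ∉ A.1 := by
      by_contra hcon
      push_neg at hcon
      have hsub : B.1 ⊆ A.1 := fun x hx => hcon x hx
      have : A.1 ∩ B.1 = B.1 := Finset.inter_eq_right.2 hsub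
      rw [this, B.2] at hlt
      omega
    obtain ⟨a, haA, haB⟩ := hAB
    obtain ⟨b, hbB, hbA⟩ := hBA
    have hbe : b ∉ A.1.erase a := fun hb => hbA (Finset.mem_of_mem_erase hb)
    have hcard' : (insert b (A.1.erase a)).card = k := by
      rw [Finset.card_insert_of_notMem hbe, Finset.card_erase_of_mem haA, A.2]
      omega
    set A' : JVertex n k := ⟨insert b (A.1.erase a), hcard'⟩ with hA'
    have hinter : A.1 ∩ A'.1 = A.1.erase a := by
      ext x
      simp only [hA', Finset.mem_inter, Finset.mem_insert, Finset.mem_erase]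
      constructor
      · rintro ⟨hx1, hx2 | ⟨hx3, hx4⟩⟩
        · exact absurd (hx2 ▸ hx1) hbA
        · exact ⟨hx3, hx1⟩
      · rintro ⟨hx1, hx2⟩
        exact ⟨hx2, Or.inr ⟨hx1, hx2⟩⟩
    have hadj : (johnsonGraph n k).Adj A A' := by
      constructor
      · intro heq
        rw [heq] at haA
        rcases Finset.mem_insert.1 haA with h1 | h1
        · exact haB (h1 ▸ hbB)
        · exact (Finset.notMem_erase a A.1) h1
      · rw [hinter, Finset.card_erase_of_mem haA, A.2]
    have hgrow : (A'.1 ∩ B.1).card = (A.1 ∩ B.1).card + 1 := by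
      have : A'.1 ∩ B.1 = insert b (A.1 ∩ B.1) := by
        ext x
        simp only [hA', Finset.mem_inter, Finset.mem_insert, Finset.mem_erase]
        constructor
        · rintro ⟨hx1 | ⟨hx2, hx3⟩, hx4⟩
          · exact Or.inl hx1
          · exact Or.inr ⟨hx3, hx4⟩
        · rintro (rfl | ⟨hx1, hx2⟩)
          · exact ⟨Or.inl rfl, hbB⟩
          · exact ⟨Or.inr ⟨fun hxa => haB (hxa ▸ hx2), hx1⟩, hx2⟩
      rw [this, Finset.card_insert_of_notMem (fun hb => hbA (Finset.mem_inter.1 hb).1)]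
    obtain ⟨p, hp⟩ := ih A' B (by omega)
    exact ⟨SimpleGraph.Walk.cons hadj p, by simpa using Nat.succ_le_succ hp⟩

lemma johnson_dist_eq (A B : JVertex n k) :
    (johnsonGraph n k).dist A B = k - (A.1 ∩ B.1).card := by
  obtain ⟨p, hp⟩ := johnson_walk_le (k - (A.1 ∩ B.1).card) A B
    (by have := johnson_card_inter_le A B; omega)
  have hle := (SimpleGraph.dist_le p).trans hp
  have hreach : (johnsonGraph n k).Reachable A B := ⟨p⟩
  obtain ⟨p₀, hp₀⟩ := hreach.exists_walk_length_eq_dist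
  have := johnson_walk_ge p₀
  omega

end JohnsonDist
section JSubsetS
variable {K W : Type*} [DivisionRing K] [AddCommGroup W] [Module K W] [FiniteDimensional K W]
variable {n k q : ℕ}

lemma iso_finrank_inter (g : JVertex n k → Grass K W q)
    (hg : ∀ A B, (grassGraph K W q).dist (g A) (g B) = (johnsonGraph n k).dist A B)
    (hkq : k ≤ q) (A B : JVertex n k) :
    finrank K ↥((g A).1 ⊓ (g B).1) = q - k + (A.1 ∩ B.1).card := by
  have h1 := grass_dist_eq (g A) (g B)
  have h2 := johnson_dist_eq A B
  have h3 := grass_finrank_le (g A) (g B)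
  have h4 := johnson_card_inter_le A B
  rw [hg A B, h2] at h1
  omega

lemma jsubset_S (hn : n = 2 * k) (hk : 1 ≤ k) (hkq : k ≤ q)
    (g : JVertex n k → Grass K W q)
    (hg : ∀ A B, (grassGraph K W q).dist (g A) (g B) = (johnsonGraph n k).dist A B) :
    ∃ S : Submodule K W, finrank K ↥S = q - k ∧ (∀ B, S ≤ (g B).1) ∧
      (∀ A B : JVertex n k, A.1 ∩ B.1 = ∅ → S = (g A).1 ⊓ (g B).1) := by
  -- a disjoint pair
  have hcu : (Finset.univ : Finset (Fin n)).card = 2 * k := by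
    rw [Finset.card_univ, Fintype.card_fin, hn]
  obtain ⟨A₀, hA₀sub, hA₀⟩ := Finset.exists_subset_card_eq (show k ≤ (Finset.univ : Finset (Fin n)).card by omega)
  have hA₁ : (Finset.univ \ A₀).card = k := by
    rw [Finset.card_sdiff_of_subset (Finset.subset_univ A₀), hcu, hA₀]
    omega
  set A : JVertex n k := ⟨A₀, hA₀⟩
  set B : JVertex n k := ⟨Finset.univ \ A₀, hA₁⟩
  have hdisj : A.1 ∩ B.1 = ∅ := by
    simp [A, B, Finset.inter_sdiff_self]
  set S := (g A).1 ⊓ (g B).1 with hS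
  have hSr : finrank K ↥S = q - k := by
    rw [hS, iso_finrank_inter g hg hkq, hdisj]
    simp
  have hmem : ∀ C : JVertex n k, S ≤ (g C).1 := by
    intro C
    have hsplit : (C.1 ∩ A.1).card + (C.1 ∩ B.1).card = k := by
      have h1 : (C.1 ∩ A.1).card + (C.1 \ A.1).card = C.1.card :=
        Finset.card_inter_add_card_sdiff C.1 A.1
      have h2 : C.1 ∩ B.1 = C.1 \ A.1 := by
        ext x; simp [A, B]
      rw [h2, C.2] at *
      omega
    have hX := iso_finrank_inter g hg hkq C A
    have hY := iso_finrank_inter g hg hkq C B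
    have hkey := Submodule.finrank_sup_add_finrank_inf_eq ((g C).1 ⊓ (g A).1) ((g C).1 ⊓ (g B).1)
    have hsup : finrank K ↥(((g C).1 ⊓ (g A).1) ⊔ ((g C).1 ⊓ (g B).1)) ≤ q := by
      calc finrank K ↥(((g C).1 ⊓ (g A).1) ⊔ ((g C).1 ⊓ (g B).1)) ≤ finrank K ↥(g C).1 :=
        Submodule.finrank_mono (sup_le inf_le_left inf_le_left)
      _ = q := (g C).2
    have hid : ((g C).1 ⊓ (g A).1) ⊓ ((g C).1 ⊓ (g B).1) = (g C).1 ⊓ S := by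
      rw [hS]
      exact (inf_inf_distrib_left _ _ _).symm
    rw [hid] at hkey
    have hfr : q - k ≤ finrank K ↥((g C).1 ⊓ S) := by omega
    have : (g C).1 ⊓ S = S := eq_of_le_of_finrank_le inf_le_right (by omega)
    rw [← this]
    exact inf_le_left
  refine ⟨S, hSr, hmem, ?_⟩
  intro A' B' hd
  have h1 : finrank K ↥((g A').1 ⊓ (g B').1) = q - k := by
    rw [iso_finrank_inter g hg hkq, hd]
    simp
  exact eq_of_le_of_finrank_le (le_inf (hmem A') (hmem B')) (by omega)

end JSubsetS
section Apartments
variable {R V : Type*} [DivisionRing R] [AddCommGroup V] [Module R V] [FiniteDimensional R V]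
variable {n k : ℕ}

/-- The apartment associated with basis `b`. -/
def apSet (b : Basis (Fin n) R V) (k : ℕ) : Set (Grass R V k) :=
  {P | P.1 ∈ JkSet R k ⇑b}

lemma apartment_apSet (b : Basis (Fin n) R V) : IsApartment R V n k (apSet b k) := ⟨b, rfl⟩

/-- The element of the apartment of `b` given by a `k`-subset. -/
def apEl (b : Basis (Fin n) R V) (A : JVertex n k) : Grass R V k :=
  ⟨span R (⇑b '' ↑A.1), by
    classical
    have hli : LinearIndependent R (Subtype.val : ((⇑b '' ↑A.1) : Set V) → V) :=
      LinearIndepOn.id_image (b.linearIndependent.comp _ Subtype.val_injective)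
    rw [← Finset.coe_image] at hli ⊢
    rw [finrank_span_finset_eq_card hli, Finset.card_image_of_injective _ b.injective, A.2]⟩

lemma apEl_coe (b : Basis (Fin n) R V) (A : JVertex n k) :
    (apEl b A).1 = span R (⇑b '' ↑A.1) := rfl

lemma apEl_mem (b : Basis (Fin n) R V) (A : JVertex n k) : apEl b A ∈ apSet b k :=
  ⟨A.1, A.2, rfl⟩

lemma mem_apSet_iff {b : Basis (Fin n) R V} {P : Grass R V k} :
    P ∈ apSet b k ↔ ∃ A : JVertex n k, P = apEl b A := by
  constructor
  · rintro ⟨A, hA, hP⟩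
    exact ⟨⟨A, hA⟩, Subtype.ext hP⟩
  · rintro ⟨A, rfl⟩
    exact apEl_mem b A

lemma mem_span_basis_image (b : Basis (Fin n) R V) (s : Finset (Fin n)) (i : Fin n) :
    b i ∈ span R (⇑b '' ↑s) ↔ i ∈ s := by
  rw [Basis.mem_span_image, Basis.repr_self]
  classical
  rw [Finsupp.support_single_ne_zero i one_ne_zero]
  simp

lemma apEl_injective (b : Basis (Fin n) R V) :
    Function.Injective (apEl b : JVertex n k → Grass R V k) := by
  intro A B h
  apply Subtype.ext
  apply Finset.ext
  intro i
  have h' : span R (⇑b '' ↑A.1) = span R (⇑b '' ↑B.1) := congrArg Subtype.val h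
  rw [← mem_span_basis_image b A.1 i, ← mem_span_basis_image b B.1 i, h']

end Apartments

section Pairs
variable {n k : ℕ}

lemma exists_disjoint_jpair (hn : n = 2 * k) :
    ∃ A B : JVertex n k, A.1 ∩ B.1 = ∅ := by
  have hcu : (Finset.univ : Finset (Fin n)).card = 2 * k := by
    rw [Finset.card_univ, Fintype.card_fin, hn]
  obtain ⟨A₀, _, hA₀⟩ := Finset.exists_subset_card_eq
    (show k ≤ (Finset.univ : Finset (Fin n)).card by omega)
  have hA₁ : (Finset.univ \ A₀).card = k := by
    rw [Finset.card_sdiff_of_subset (Finset.subset_univ A₀), hcu, hA₀]; omega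
  exact ⟨⟨A₀, hA₀⟩, ⟨Finset.univ \ A₀, hA₁⟩, Finset.inter_sdiff_self A₀ Finset.univ⟩

lemma choose_double (hk : 1 ≤ k) : Nat.choose (2 * k) k = 2 * Nat.choose (2 * k - 1) k := by
  have h2k : 2 * k = (2 * k - 1) + 1 := by omega
  have hk' : k = (k - 1) + 1 := by omega
  have hsymm : Nat.choose (2 * k - 1) (k - 1) = Nat.choose (2 * k - 1) k := by
    have := Nat.choose_symm (show k ≤ 2 * k - 1 by omega)
    have hd : 2 * k - 1 - k = k - 1 := by omega
    rw [hd] at this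
    exact this
  calc Nat.choose (2 * k) k = Nat.choose ((2 * k - 1) + 1) ((k - 1) + 1) := by rw [← h2k, ← hk']
  _ = Nat.choose (2 * k - 1) (k - 1) + Nat.choose (2 * k - 1) ((k - 1) + 1) :=
      Nat.choose_succ_succ _ _
  _ = 2 * Nat.choose (2 * k - 1) k := by rw [hsymm, ← hk']; ring

lemma exists_compl_pair (hn : n = 2 * k) (hk : 1 ≤ k) (ℬ : Finset (JVertex n k))
    (hcard : Nat.choose (2 * k - 1) k + 1 ≤ ℬ.card) :
    ∃ A B, A ∈ ℬ ∧ B ∈ ℬ ∧ A.1 ∩ B.1 = ∅ := by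
  classical
  set ι : JVertex n k → JVertex n k := fun A => ⟨A.1ᶜ, by
    rw [Finset.card_compl, A.2, Fintype.card_fin, hn]; omega⟩ with hι
  by_contra hcon
  push_neg at hcon
  have hdisj : Disjoint ℬ (ℬ.image ι) := by
    rw [Finset.disjoint_left]
    intro A hA hA'
    obtain ⟨B, hB, hBA⟩ := Finset.mem_image.1 hA'
    have : B.1 ∩ A.1 = ∅ := by
      rw [← hBA]
      exact Finset.inter_compl B.1
    exact absurd this (Finset.nonempty_iff_ne_empty.1 (hcon B A hB hA))
  have hιinj : Function.Injective ι := by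
    intro A B h
    apply Subtype.ext
    have : A.1ᶜ = B.1ᶜ := congrArg Subtype.val h
    simpa using congrArg (·ᶜ) this
  have hcard2 : ℬ.card + ℬ.card ≤ Fintype.card (JVertex n k) := by
    have := Finset.card_union_of_disjoint hdisj
    have h1 : (ℬ.image ι).card = ℬ.card := Finset.card_image_of_injective _ hιinj
    calc ℬ.card + ℬ.card = (ℬ ∪ ℬ.image ι).card := by rw [this, h1]
    _ ≤ Fintype.card (JVertex n k) := Finset.card_le_univ _
  have hcu : Fintype.card (JVertex n k) = Nat.choose (2 * k) k := by
    rw [Fintype.card_finset_len, Fintype.card_fin, hn]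
  rw [hcu, choose_double hk] at hcard2
  omega

end Pairs
section Package
variable {R V R' V' : Type*} [DivisionRing R] [AddCommGroup V] [Module R V]
    [DivisionRing R'] [AddCommGroup V'] [Module R' V']
    [FiniteDimensional R V] [FiniteDimensional R' V']
variable {n k k' : ℕ}

/-- The property of being "the" common subspace for the apartment of `b`. -/
def SProp (f : Grass R V k → Grass R' V' k') (S : Submodule R' V')
    (b : Basis (Fin n) R V) : Prop :=
  finrank R' ↥S = k' - k ∧ ∀ P ∈ apSet b k, S ≤ (f P).1

lemma apartment_package (hn : n = 2 * k) (hk : 1 ≤ k) (hkk' : k ≤ k')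
    (f : Grass R V k → Grass R' V' k') (hf : IsJMapping R V R' V' n k k' f)
    (b : Basis (Fin n) R V) :
    ∃ S, SProp f S b ∧ (∀ T, SProp f T b → T = S) ∧
      ∀ 𝒞 : Finset (Grass R V k), ↑𝒞 ⊆ apSet b k →
        Nat.choose (2 * k - 1) k + 1 ≤ 𝒞.card →
        ∃ P Q, P ∈ 𝒞 ∧ Q ∈ 𝒞 ∧ S = (f P).1 ⊓ (f Q).1 := by
  classical
  obtain ⟨g, hginj, hgdist, hgrange⟩ := hf (apSet b k) (apartment_apSet b)
  obtain ⟨S, hSr, hSle, hSdis⟩ := jsubset_S hn hk hkk' g hgdist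
  have hfmem : ∀ P ∈ apSet b k, ∃ B, g B = f P := by
    intro P hP
    have : f P ∈ Set.range g := by rw [hgrange]; exact ⟨P, hP, rfl⟩
    exact this
  have hle : ∀ P ∈ apSet b k, S ≤ (f P).1 := by
    intro P hP
    obtain ⟨B, hB⟩ := hfmem P hP
    rw [← hB]
    exact hSle B
  have hex : ∀ A : JVertex n k, ∃ B, g B = f (apEl b A) := fun A => hfmem _ (apEl_mem b A)
  choose h hh using hex
  have hsurj : Function.Surjective h := by
    intro B
    have : g B ∈ f '' apSet b k := by rw [← hgrange]; exact Set.mem_range_self B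
    obtain ⟨P, hP, hPB⟩ := this
    obtain ⟨A, rfl⟩ := mem_apSet_iff.1 hP
    exact ⟨A, hginj (by rw [hh, hPB])⟩
  have hinj' : Function.Injective h := Finite.injective_iff_surjective.2 hsurj
  have hfinj : Set.InjOn f (apSet b k) := by
    intro P hP Q hQ hPQ
    obtain ⟨A, rfl⟩ := mem_apSet_iff.1 hP
    obtain ⟨A', rfl⟩ := mem_apSet_iff.1 hQ
    have : g (h A) = g (h A') := by rw [hh, hh, hPQ]
    rw [hinj' (hginj this)]
  refine ⟨S, ⟨hSr, hle⟩, ?_, ?_⟩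
  · rintro T ⟨hTr, hTle⟩
    obtain ⟨A₀, B₀, hd⟩ := exists_disjoint_jpair hn
    have hSeq := hSdis A₀ B₀ hd
    have h1 : g A₀ ∈ f '' apSet b k := by rw [← hgrange]; exact Set.mem_range_self _
    have h2 : g B₀ ∈ f '' apSet b k := by rw [← hgrange]; exact Set.mem_range_self _
    obtain ⟨P, hP, hPA⟩ := h1
    obtain ⟨Q, hQ, hQA⟩ := h2
    have hTS : T ≤ S := by
      rw [hSeq, ← hPA, ← hQA]
      exact le_inf (hTle P hP) (hTle Q hQ)
    exact eq_of_le_of_finrank_le hTS (by omega)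
  · intro 𝒞 h𝒞 hcard
    set ℬ : Finset (JVertex n k) :=
      Finset.univ.filter (fun B => g B ∈ f '' (↑𝒞 : Set (Grass R V k))) with hℬ
    have hcard2 : 𝒞.card ≤ ℬ.card := by
      have hmapsto : ∀ P ∈ 𝒞, ∃ B, g B = f P := fun P hP => hfmem P (h𝒞 hP)
      choose φ hφ using hmapsto
      have hc := Finset.card_le_card_of_injOn (s := 𝒞.attach) (t := ℬ)
        (fun x => φ x.1 x.2) ?_ ?_
      · rwa [Finset.card_attach] at hc
      · intro a _
        rw [hℬ, Finset.mem_coe, Finset.mem_filter]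
        refine ⟨Finset.mem_univ _, ?_⟩
        rw [hφ a.1 a.2]
        exact ⟨a.1, a.2, rfl⟩
      · intro x _ y _ hxy
        have hxy' : φ x.1 x.2 = φ y.1 y.2 := hxy
        have hfeq : f x.1 = f y.1 := by
          rw [← hφ x.1 x.2, ← hφ y.1 y.2, hxy']
        exact Subtype.ext (hfinj (h𝒞 x.2) (h𝒞 y.2) hfeq)
    obtain ⟨A, B, hA, hB, hAB⟩ := exists_compl_pair hn hk ℬ (le_trans hcard hcard2)
    rw [hℬ, Finset.mem_filter] at hA hB
    obtain ⟨P, hP𝒞, hPA⟩ := hA.2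
    obtain ⟨Q, hQ𝒞, hQA⟩ := hB.2
    refine ⟨P, Q, Finset.mem_coe.1 hP𝒞, Finset.mem_coe.1 hQ𝒞, ?_⟩
    rw [hPA, hQA]
    exact hSdis A B hAB

end Package
section Transvect
variable {R V : Type*} [DivisionRing R] [AddCommGroup V] [Module R V]
variable {n : ℕ}

lemma exists_transvect_basis (b : Basis (Fin n) R V) (i t : Fin n) (hti : t ≠ i) (a : R) :
    ∃ b' : Basis (Fin n) R V, ⇑b' = Function.update ⇑b i (b i + a • b t) := by
  classical
  set u : Fin n → V := Function.update ⇑b i (b i + a • b t) with hu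
  set w : Fin n → V := Function.update ⇑b i (b i - a • b t) with hw
  have hut : u t = b t := by rw [hu, Function.update_of_ne hti]
  have hwt : w t = b t := by rw [hw, Function.update_of_ne hti]
  have hui : u i = b i + a • b t := by rw [hu, Function.update_self]
  have hwi : w i = b i - a • b t := by rw [hw, Function.update_self]
  set φ : V →ₗ[R] V := b.constr ℕ u with hφ
  set ψ : V →ₗ[R] V := b.constr ℕ w with hψ
  have h1 : φ.comp ψ = LinearMap.id := by
    apply b.ext
    intro j
    rcases eq_or_ne j i with rfl | hj
    · simp only [LinearMap.comp_apply, LinearMap.id_apply, hψ, Basis.constr_basis, hwi]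
      rw [map_sub, map_smul, hφ, Basis.constr_basis, Basis.constr_basis, hut, hui]
      abel
    · simp only [LinearMap.comp_apply, LinearMap.id_apply, hψ, Basis.constr_basis]
      rw [hw, Function.update_of_ne hj, hφ, Basis.constr_basis, hu, Function.update_of_ne hj]
  have h2 : ψ.comp φ = LinearMap.id := by
    apply b.ext
    intro j
    rcases eq_or_ne j i with rfl | hj
    · simp only [LinearMap.comp_apply, LinearMap.id_apply, hφ, Basis.constr_basis, hui]
      rw [map_add, map_smul, hψ, Basis.constr_basis, Basis.constr_basis, hwt, hwi]
      abel
    · simp only [LinearMap.comp_apply, LinearMap.id_apply, hφ, Basis.constr_basis]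
      rw [hu, Function.update_of_ne hj, hψ, Basis.constr_basis, hw, Function.update_of_ne hj]
  set e : V ≃ₗ[R] V := LinearEquiv.ofLinear φ ψ h1 h2 with he
  refine ⟨b.map e, ?_⟩
  funext j
  rw [Basis.map_apply]
  show φ (b j) = u j
  rw [hφ, Basis.constr_basis]

variable {k : ℕ}

/-- If both `i` and `t` belong to `s`, a transvection does not change the span. -/
lemma span_transvect_eq (b b' : Basis (Fin n) R V) (i t : Fin n) (hti : t ≠ i) (a : R)
    (hb' : ⇑b' = Function.update ⇑b i (b i + a • b t))
    (s : Finset (Fin n)) (hi : i ∈ s) (ht : t ∈ s) :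
    span R (⇑b '' ↑s) = span R (⇑b' '' ↑s) := by
  have hb't : b' t = b t := by rw [hb', Function.update_of_ne hti]
  have hb'i : b' i = b i + a • b t := by rw [hb', Function.update_self]
  apply le_antisymm
  · rw [span_le]
    rintro y ⟨x, hx, rfl⟩
    rcases eq_or_ne x i with rfl | hx'
    · have h1 : b' x ∈ span R (⇑b' '' ↑s) := subset_span ⟨x, hx, rfl⟩
      have h2 : b' t ∈ span R (⇑b' '' ↑s) := subset_span ⟨t, ht, rfl⟩
      have : b x = b' x - a • b' t := by rw [hb'i, hb't]; abel
      rw [this]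
      exact Submodule.sub_mem _ h1 (Submodule.smul_mem _ a h2)
    · have : b x = b' x := by rw [hb', Function.update_of_ne hx']
      rw [this]
      exact subset_span ⟨x, hx, rfl⟩
  · rw [span_le]
    rintro y ⟨x, hx, rfl⟩
    rcases eq_or_ne x i with rfl | hx'
    · have h1 : b x ∈ span R (⇑b '' ↑s) := subset_span ⟨x, hx, rfl⟩
      have h2 : b t ∈ span R (⇑b '' ↑s) := subset_span ⟨t, ht, rfl⟩
      rw [hb'i]
      exact Submodule.add_mem _ h1 (Submodule.smul_mem _ a h2)
    · have : b' x = b x := by rw [hb', Function.update_of_ne hx']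
      rw [this]
      exact subset_span ⟨x, hx, rfl⟩

/-- Spans of families which agree up to nonzero scalars coincide. -/
lemma span_image_congr_smul (x y : Fin n → V) (s : Set (Fin n))
    (hxy : ∀ j ∈ s, ∃ u : R, u ≠ 0 ∧ x j = u • y j) :
    span R (x '' s) = span R (y '' s) := by
  apply le_antisymm
  · rw [span_le]
    rintro z ⟨j, hj, rfl⟩
    obtain ⟨u, hu, hxj⟩ := hxy j hj
    rw [hxj]
    exact Submodule.smul_mem _ u (subset_span ⟨j, hj, rfl⟩)
  · rw [span_le]
    rintro z ⟨j, hj, rfl⟩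
    obtain ⟨u, hu, hxj⟩ := hxy j hj
    have : y j = u⁻¹ • x j := by
      rw [hxj, smul_smul, inv_mul_cancel₀ hu, one_smul]
    rw [this]
    exact Submodule.smul_mem _ u⁻¹ (subset_span ⟨j, hj, rfl⟩)

lemma apSet_eq_of_smul (b b' : Basis (Fin n) R V)
    (hxy : ∀ j, ∃ u : R, u ≠ 0 ∧ (⇑b' : Fin n → V) j = u • b j) :
    apSet b' k = apSet (V := V) b k := by
  unfold apSet JkSet
  ext P
  simp only [Set.mem_setOf_eq]
  constructor
  · rintro ⟨A, hA, hP⟩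
    exact ⟨A, hA, by rw [hP, span_image_congr_smul ⇑b' ⇑b _ (fun j _ => hxy j)]⟩
  · rintro ⟨A, hA, hP⟩
    exact ⟨A, hA, by rw [hP, ← span_image_congr_smul ⇑b' ⇑b _ (fun j _ => hxy j)]⟩

lemma apSet_reindex (b : Basis (Fin n) R V) (σ : Equiv.Perm (Fin n)) :
    apSet (b.reindex σ) k = apSet (V := V) b k := by
  classical
  unfold apSet JkSet
  ext P
  simp only [Set.mem_setOf_eq]
  constructor
  · rintro ⟨A, hA, hP⟩
    refine ⟨A.image σ.symm, by rw [Finset.card_image_of_injective _ σ.symm.injective, hA], ?_⟩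
    rw [hP]
    congr 1
    rw [Finset.coe_image, ← Set.image_comp]
    ext v
    constructor
    · rintro ⟨x, hx, rfl⟩
      exact ⟨x, hx, by simp⟩
    · rintro ⟨x, hx, rfl⟩
      exact ⟨x, hx, by simp⟩
  · rintro ⟨A, hA, hP⟩
    refine ⟨A.image σ, by rw [Finset.card_image_of_injective _ σ.injective, hA], ?_⟩
    rw [hP]
    congr 1
    rw [Finset.coe_image, ← Set.image_comp]
    ext v
    constructor
    · rintro ⟨x, hx, rfl⟩
      exact ⟨x, hx, by simp⟩
    · rintro ⟨x, hx, rfl⟩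
      exact ⟨x, hx, by simp⟩

end Transvect
section Moves
variable {R V R' V' : Type*} [DivisionRing R] [AddCommGroup V] [Module R V]
    [DivisionRing R'] [AddCommGroup V'] [Module R' V']
    [FiniteDimensional R V] [FiniteDimensional R' V']
variable {n k k' : ℕ}

/-- Two bases determine the same canonical subspace. -/
def SEq (f : Grass R V k → Grass R' V' k') (b b' : Basis (Fin n) R V) : Prop :=
  ∀ S S' : Submodule R' V', SProp f S b → SProp f S' b' → S = S'

lemma SEq_of_apSet_eq (hn : n = 2 * k) (hk : 1 ≤ k) (hkk' : k ≤ k')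
    (f : Grass R V k → Grass R' V' k') (hf : IsJMapping R V R' V' n k k' f)
    (b b' : Basis (Fin n) R V) (hbb' : apSet b k = apSet b' k) : SEq f b b' := by
  obtain ⟨S₀, _, huniq, _⟩ := apartment_package hn hk hkk' f hf b
  intro S S' hS hS'
  rw [huniq S hS, huniq S' ⟨hS'.1, fun P hP => hS'.2 P (hbb' ▸ hP)⟩]

lemma SEq_trans (hn : n = 2 * k) (hk : 1 ≤ k) (hkk' : k ≤ k')
    (f : Grass R V k → Grass R' V' k') (hf : IsJMapping R V R' V' n k k' f)
    (b₁ b₂ b₃ : Basis (Fin n) R V) (h12 : SEq f b₁ b₂) (h23 : SEq f b₂ b₃) :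
    SEq f b₁ b₃ := by
  intro S S' h1 h3
  obtain ⟨S₂, hS₂, _, _⟩ := apartment_package hn hk hkk' f hf b₂
  rw [h12 S S₂ h1 hS₂, h23 S₂ S' hS₂ h3]

lemma SEq_move (hn : n = 2 * k) (hk : 2 ≤ k) (hkk' : k ≤ k')
    (f : Grass R V k → Grass R' V' k') (hf : IsJMapping R V R' V' n k k' f)
    (b b' : Basis (Fin n) R V) (i t : Fin n) (hti : t ≠ i) (a : R)
    (hb' : ⇑b' = Function.update ⇑b i (b i + a • b t)) : SEq f b b' := by
  classical
  have hk1 : 1 ≤ k := by omega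
  obtain ⟨S₀, hS₀, huniq, hover⟩ := apartment_package hn hk1 hkk' f hf b
  -- build the common part of the two apartments
  have hcard_univ : (Finset.univ : Finset (Fin n)).card = 2 * k := by
    rw [Finset.card_univ, Fintype.card_fin, hn]
  have hterase : t ∈ Finset.univ.erase i := Finset.mem_erase.2 ⟨hti, Finset.mem_univ t⟩
  have hcard_e : (Finset.univ.erase i).card = 2 * k - 1 := by
    rw [Finset.card_erase_of_mem (Finset.mem_univ i), hcard_univ]
  have hcard_et : ((Finset.univ.erase i).erase t).card = 2 * k - 2 := by
    rw [Finset.card_erase_of_mem hterase, hcard_e]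
    omega
  obtain ⟨T, hTsub, hTcard⟩ := Finset.exists_subset_card_eq
    (show k - 2 ≤ ((Finset.univ.erase i).erase t).card by omega)
  have hiT : i ∉ T := fun h => by
    have := hTsub h
    exact (Finset.mem_erase.1 (Finset.mem_of_mem_erase this)).1 rfl
  have htT : t ∉ T := fun h => (Finset.mem_erase.1 (hTsub h)).1 rfl
  set Astar : Finset (Fin n) := insert i (insert t T) with hAstar
  have hiAstar : i ∈ Astar := Finset.mem_insert_self i _
  have htAstar : t ∈ Astar := Finset.mem_insert_of_mem (Finset.mem_insert_self t T)
  have hAcard : Astar.card = k := by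
    rw [hAstar, Finset.card_insert_of_notMem (by
      intro h
      rcases Finset.mem_insert.1 h with h | h
      · exact hti h.symm
      · exact hiT h), Finset.card_insert_of_notMem htT, hTcard]
    omega
  set 𝒟 : Finset (Finset (Fin n)) := insert Astar (Finset.powersetCard k (Finset.univ.erase i)) with h𝒟
  have hAnotin : Astar ∉ Finset.powersetCard k (Finset.univ.erase i) := by
    intro h
    have := (Finset.mem_powersetCard.1 h).1 hiAstar
    exact (Finset.mem_erase.1 this).1 rfl
  have h𝒟card : 𝒟.card = Nat.choose (2 * k - 1) k + 1 := by
    rw [h𝒟, Finset.card_insert_of_notMem hAnotin, Finset.card_powersetCard, hcard_e]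
  have h𝒟k : ∀ A ∈ 𝒟, A.card = k := by
    intro A hA
    rcases Finset.mem_insert.1 hA with rfl | hA
    · exact hAcard
    · exact (Finset.mem_powersetCard.1 hA).2
  set ℰ : Finset (JVertex n k) := Finset.univ.filter (fun A => A.1 ∈ 𝒟) with hℰ
  have hℰcard : 𝒟.card ≤ ℰ.card := by
    have hc := Finset.card_le_card_of_injOn (s := 𝒟.attach) (t := ℰ)
      (fun D => (⟨D.1, h𝒟k D.1 D.2⟩ : JVertex n k)) ?_ ?_
    · rwa [Finset.card_attach] at hc
    · intro D _
      rw [hℰ, Finset.mem_coe, Finset.mem_filter]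
      exact ⟨Finset.mem_univ _, D.2⟩
    · intro D _ E _ hDE
      have hv : (D.1 : Finset (Fin n)) = E.1 := by
        have := congrArg Subtype.val hDE
        simpa using this
      exact Subtype.ext hv
  set 𝒞 : Finset (Grass R V k) := ℰ.image (apEl b) with h𝒞
  have h𝒞card : ℰ.card = 𝒞.card := (Finset.card_image_of_injective ℰ (apEl_injective b)).symm
  have h𝒞sub : ↑𝒞 ⊆ apSet b k := by
    intro P hP
    obtain ⟨A, _, rfl⟩ := Finset.mem_image.1 (Finset.mem_coe.1 hP)
    exact apEl_mem b A
  have h𝒞sub' : ↑𝒞 ⊆ apSet b' k := by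
    intro P hP
    obtain ⟨A, hAℰ, rfl⟩ := Finset.mem_image.1 (Finset.mem_coe.1 hP)
    have hA𝒟 : A.1 ∈ 𝒟 := (Finset.mem_filter.1 hAℰ).2
    rcases Finset.mem_insert.1 hA𝒟 with hA | hA
    · -- A = Astar contains i and t
      refine ⟨A.1, A.2, ?_⟩
      rw [apEl_coe]
      exact span_transvect_eq b b' i t hti a hb' A.1 (hA ▸ hiAstar) (hA ▸ htAstar)
    · -- A avoids i
      have hiA : i ∉ A.1 := fun h => by
        have := (Finset.mem_powersetCard.1 hA).1 h
        exact (Finset.mem_erase.1 this).1 rfl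
      refine ⟨A.1, A.2, ?_⟩
      rw [apEl_coe]
      congr 1
      apply Set.image_congr
      intro x hx
      have hxi : x ≠ i := fun h => hiA (h ▸ hx)
      rw [hb', Function.update_of_ne hxi]
  obtain ⟨P, Q, hP, hQ, hSPQ⟩ := hover 𝒞 h𝒞sub (by omega)
  intro S S' hS hS'
  rw [huniq S hS]
  have hS'le : S' ≤ S₀ := by
    rw [hSPQ]
    exact le_inf (hS'.2 P (h𝒞sub' (Finset.mem_coe.2 hP))) (hS'.2 Q (h𝒞sub' (Finset.mem_coe.2 hQ)))
  have h1 := hS₀.1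
  have h2 := hS'.1
  exact (eq_of_le_of_finrank_le hS'le (by omega)).symm

lemma SEq_chain (hn : n = 2 * k) (hk : 2 ≤ k) (hkk' : k ≤ k')
    (f : Grass R V k → Grass R' V' k') (hf : IsJMapping R V R' V' n k k' f)
    (b : Basis (Fin n) R V) (i : Fin n) (c : Fin n → R) (T : Finset (Fin n)) (hiT : i ∉ T) :
    ∃ b' : Basis (Fin n) R V,
      ⇑b' = Function.update ⇑b i (b i + ∑ t ∈ T, c t • b t) ∧ SEq f b b' := by
  classical
  have hk1 : 1 ≤ k := by omega
  induction T using Finset.induction_on with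
  | empty =>
    refine ⟨b, ?_, SEq_of_apSet_eq hn hk1 hkk' f hf b b rfl⟩
    have h0 : b i + ∑ t ∈ (∅ : Finset (Fin n)), c t • b t = b i := by simp
    rw [h0, Function.update_eq_self]
  | insert t T htT ih =>
    have hiT' : i ∉ T := fun h => hiT (Finset.mem_insert_of_mem h)
    have hit : t ≠ i := fun h => hiT (h ▸ Finset.mem_insert_self t T)
    obtain ⟨b₁, hb₁, hSEq₁⟩ := ih hiT'
    obtain ⟨b₂, hb₂⟩ := exists_transvect_basis b₁ i t hit (c t)
    have hb₁t : b₁ t = b t := by rw [show b₁ t = (⇑b₁) t from rfl, hb₁, Function.update_of_ne hit]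
    have hb₁i : b₁ i = b i + ∑ t' ∈ T, c t' • b t' := by
      rw [show b₁ i = (⇑b₁) i from rfl, hb₁, Function.update_self]
    have hb₂' : ⇑b₂ = Function.update ⇑b i (b i + ∑ t' ∈ insert t T, c t' • b t') := by
      rw [hb₂, hb₁, Function.update_idem]
      congr 1
      rw [Function.update_self, Function.update_of_ne hit, Finset.sum_insert htT, add_assoc,
        add_comm (∑ t' ∈ T, c t' • b t')]
    exact ⟨b₂, hb₂', SEq_trans hn hk1 hkk' f hf b b₁ b₂ hSEq₁
      (SEq_move hn hk hkk' f hf b₁ b₂ i t hit (c t) hb₂)⟩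

lemma SEq_replace (hn : n = 2 * k) (hk : 2 ≤ k) (hkk' : k ≤ k')
    (f : Grass R V k → Grass R' V' k') (hf : IsJMapping R V R' V' n k k' f)
    (d : Basis (Fin n) R V) (i : Fin n) (v : V) (hv : d.repr v i ≠ 0) :
    ∃ d' : Basis (Fin n) R V,
      ⇑d' = Function.update ⇑d i ((d.repr v i)⁻¹ • v) ∧ SEq f d d' := by
  classical
  set cc := d.repr v with hcc
  set a : Fin n → R := fun t => (cc i)⁻¹ * cc t with ha
  obtain ⟨d', hd', hSEq⟩ := SEq_chain hn hk hkk' f hf d i a (Finset.univ.erase i)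
    (Finset.notMem_erase i Finset.univ)
  have hv_sum : ∑ t, cc t • d t = v := by
    rw [hcc]
    exact Basis.sum_repr d v
  have h1 : ∑ t, a t • d t = (cc i)⁻¹ • v := by
    rw [← hv_sum, Finset.smul_sum]
    apply Finset.sum_congr rfl
    intro t _
    simp only [ha]
    rw [mul_smul]
  have h2 : a i • d i + ∑ t ∈ Finset.univ.erase i, a t • d t = ∑ t, a t • d t :=
    Finset.add_sum_erase Finset.univ (fun t => a t • d t) (Finset.mem_univ i)
  have h3 : a i • d i = d i := by
    simp only [ha]
    rw [inv_mul_cancel₀ hv, one_smul]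
  have hsum : d i + ∑ t ∈ Finset.univ.erase i, a t • d t = (cc i)⁻¹ • v := by
    rw [← h1, ← h2, h3]
  rw [hsum] at hd'
  exact ⟨d', hd', hSEq⟩

lemma SEq_all (hn : n = 2 * k) (hk : 2 ≤ k) (hkk' : k ≤ k')
    (f : Grass R V k → Grass R' V' k') (hf : IsJMapping R V R' V' n k k' f)
    (b c : Basis (Fin n) R V) : SEq f b c := by
  classical
  have hk1 : 1 ≤ k := by omega
  suffices h : ∀ m : ℕ, m ≤ n → ∃ d : Basis (Fin n) R V,
      (∀ j : Fin n, (j : ℕ) < m → ∃ u : R, u ≠ 0 ∧ d j = u • c j) ∧ SEq f b d by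
    obtain ⟨d, hd, hSEq⟩ := h n le_rfl
    have hap : apSet d k = apSet c k :=
      apSet_eq_of_smul c d (fun j => hd j j.isLt)
    intro S S' hS hS'
    exact hSEq S S' hS ⟨hS'.1, fun P hP => hS'.2 P (hap ▸ hP)⟩
  intro m
  induction m with
  | zero =>
    intro _
    exact ⟨b, fun j hj => absurd hj (Nat.not_lt_zero _),
      SEq_of_apSet_eq hn hk1 hkk' f hf b b rfl⟩
  | succ m ih =>
    intro hm1
    obtain ⟨d, hd, hSEq⟩ := ih (by omega)
    set jm : Fin n := ⟨m, by omega⟩ with hjm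
    set cm : V := c jm with hcm
    have hex : ∃ t₀ : Fin n, m ≤ (t₀ : ℕ) ∧ d.repr cm t₀ ≠ 0 := by
      by_contra hcon
      push_neg at hcon
      have hsupp : ↑(d.repr cm).support ⊆ {t : Fin n | (t : ℕ) < m} := by
        intro t ht
        by_contra hlt
        simp only [Set.mem_setOf_eq, not_lt] at hlt
        exact (Finsupp.mem_support_iff.1 ht) (hcon t hlt)
      have h1 : cm ∈ span R (⇑d '' {t : Fin n | (t : ℕ) < m}) :=
        (Basis.mem_span_image d).2 hsupp
      have h2 : span R (⇑d '' {t : Fin n | (t : ℕ) < m})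
          = span R (⇑c '' {t : Fin n | (t : ℕ) < m}) :=
        span_image_congr_smul ⇑d ⇑c _ (fun j hj => hd j hj)
      rw [h2] at h1
      have : jm ∉ {t : Fin n | (t : ℕ) < m} := by simp [hjm]
      exact c.linearIndependent.notMem_span_image this h1
    obtain ⟨t₀, ht₀m, ht₀⟩ := hex
    set σ : Equiv.Perm (Fin n) := Equiv.swap jm t₀ with hσ
    set d₁ : Basis (Fin n) R V := d.reindex σ with hd₁
    have hSEq₁ : SEq f b d₁ :=
      SEq_trans hn hk1 hkk' f hf b d d₁ hSEq
        (SEq_of_apSet_eq hn hk1 hkk' f hf d d₁ (apSet_reindex d σ).symm)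
    have hrepr₁ : d₁.repr cm jm = d.repr cm t₀ := by
      rw [hd₁, Basis.repr_reindex_apply]
      congr 1
      rw [hσ, Equiv.symm_swap, Equiv.swap_apply_left]
    obtain ⟨d₂, hd₂, hSEq₂⟩ := SEq_replace hn hk hkk' f hf d₁ jm cm (by rw [hrepr₁]; exact ht₀)
    refine ⟨d₂, ?_, SEq_trans hn hk1 hkk' f hf b d₁ d₂ hSEq₁ hSEq₂⟩
    intro j hj
    by_cases hjmeq : j = jm
    · refine ⟨(d₁.repr cm jm)⁻¹, inv_ne_zero (by rw [hrepr₁]; exact ht₀), ?_⟩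
      rw [hjmeq, show d₂ jm = (⇑d₂) jm from rfl, hd₂, Function.update_self, hcm]
    · have hjm' : (j : ℕ) < m := by
        have : (j : ℕ) ≠ m := fun h => hjmeq (Fin.ext h)
        omega
      have h1 : d₂ j = d₁ j := by
        rw [show d₂ j = (⇑d₂) j from rfl, hd₂, Function.update_of_ne hjmeq]
      have h2 : d₁ j = d j := by
        rw [hd₁, Basis.reindex_apply, hσ, Equiv.symm_swap,
          Equiv.swap_apply_of_ne_of_ne hjmeq (by
            intro h
            rw [h] at hjm'
            omega)]
      obtain ⟨u, hu, hdu⟩ := hd j hjm'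
      exact ⟨u, hu, by rw [h1, h2, hdu]⟩

end Moves
section Extend
variable {R V : Type*} [DivisionRing R] [AddCommGroup V] [Module R V] [FiniteDimensional R V]
variable {n k : ℕ}

lemma exists_apartment_containing (hV : finrank R V = n) (P : Grass R V k) :
    ∃ c : Basis (Fin n) R V, P ∈ apSet c k := by
  classical
  set bp : Basis (Fin k) R ↥P.1 := (Module.finBasis R ↥P.1).reindex (finCongr P.2) with hbp
  have hli0 : LinearIndependent R (fun i : Fin k => ((bp i : V))) :=
    bp.linearIndependent.map' P.1.subtype (ker_subtype P.1)
  set s : Set V := Set.range (fun i : Fin k => (bp i : V)) with hs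
  have hsli : LinearIndepOn R id s := (linearIndepOn_id_range_iff hli0.injective).mpr hli0
  set t : Set V := hsli.extend (Set.subset_univ s) with ht
  have hst : s ⊆ t := hsli.subset_extend _
  set bV : Basis ↥t R V := Basis.extend hsli with hbV
  haveI : Fintype ↥t := FiniteDimensional.fintypeBasisIndex bV
  have hcardt : Fintype.card ↥t = n := by rw [← finrank_eq_card_basis bV, hV]
  set e : ↥t ≃ Fin n := Fintype.equivFinOfCardEq hcardt with he
  set c : Basis (Fin n) R V := bV.reindex e with hc
  have hmem : ∀ i : Fin k, (bp i : V) ∈ t := fun i => hst ⟨i, rfl⟩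
  set A : Finset (Fin n) :=
    Finset.image (fun i : Fin k => e ⟨(bp i : V), hmem i⟩) Finset.univ with hA
  have hinj : Function.Injective (fun i : Fin k => e ⟨(bp i : V), hmem i⟩) := by
    intro i j hij
    have h2 := e.injective hij
    have h1 : ((bp i : V)) = (bp j : V) := by
      simpa using congrArg Subtype.val h2
    exact bp.injective (Subtype.ext h1)
  have hAcard : A.card = k := by
    rw [hA, Finset.card_image_of_injective _ hinj, Finset.card_univ, Fintype.card_fin]
  have himage : ⇑c '' ↑A = s := by
    ext x
    constructor
    · rintro ⟨j, hj, rfl⟩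
      rw [hA] at hj
      obtain ⟨i, _, rfl⟩ := Finset.mem_image.1 (Finset.mem_coe.1 hj)
      rw [hc, Basis.reindex_apply, Equiv.symm_apply_apply, hbV, Basis.extend_apply_self]
      exact ⟨i, rfl⟩
    · rintro ⟨i, rfl⟩
      refine ⟨e ⟨(bp i : V), hmem i⟩,
        Finset.mem_coe.2 (Finset.mem_image.2 ⟨i, Finset.mem_univ i, rfl⟩), ?_⟩
      rw [hc, Basis.reindex_apply, Equiv.symm_apply_apply, hbV, Basis.extend_apply_self]
  have hspan : span R s = P.1 := by
    rw [hs]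
    have hcomp : Set.range (fun i : Fin k => (bp i : V)) = P.1.subtype '' Set.range ⇑bp := by
      rw [← Set.range_comp]
      rfl
    rw [hcomp, span_image, bp.span_eq, Submodule.map_subtype_top]
  exact ⟨c, A, hAcard, by rw [himage, hspan]⟩

end Extend
/-- If `n = 2k`, `k ≥ 2`, `k ≤ k'` and `k ≤ n' - k'`, then for every
`J`-mapping `f` of `G_k(V)` to `G_{k'}(V')` there is a `(k'-k)`-dimensional subspace `S`
of `V'` contained in `f P` for every `P ∈ G_k(V)`. -/
theorem jMapping_common_subspace
    {R V R' V' : Type*} [DivisionRing R] [AddCommGroup V] [Module R V]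
    [DivisionRing R'] [AddCommGroup V'] [Module R' V']
    [FiniteDimensional R V] [FiniteDimensional R' V'] (n n' k k' : ℕ)
    (hV : Module.finrank R V = n) (hV' : Module.finrank R' V' = n')
    (hn : n = 2 * k) (hk : 2 ≤ k) (hkk' : k ≤ k') (hkn' : k ≤ n' - k')
    (f : Grass R V k → Grass R' V' k') (hf : IsJMapping R V R' V' n k k' f) :
    ∃ S : Submodule R' V', Module.finrank R' ↥S = k' - k ∧
      ∀ P : Grass R V k, S ≤ (f P).1 := by
  have hk1 : 1 ≤ k := by omega
  set b₀ : Basis (Fin n) R V := (Module.finBasis R V).reindex (finCongr hV) with hb₀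
  obtain ⟨S₀, hS₀, _, _⟩ := apartment_package hn hk1 hkk' f hf b₀
  refine ⟨S₀, hS₀.1, ?_⟩
  intro P
  obtain ⟨c, hPc⟩ := exists_apartment_containing hV P
  obtain ⟨S₁, hS₁, _, _⟩ := apartment_package hn hk1 hkk' f hf c
  have heq := SEq_all hn hk hkk' f hf b₀ c S₀ S₁ hS₀ hS₁
  rw [heq]
  exact hS₁.2 P hPc
end

section
/- Let V be an n-dimensional left vector space over a division ring R, V' an n'-dimensional left vector space over a division ring R', 1 ≤ k ≤ n−1, 1 ≤ k' ≤ n'−1, and let f : G_k(V) → G_{k'}(V') be a mapping whose restriction to every apartment of G_k(V) preserves graph distances, i.e. for every apartment A and all P, Q ∈ A the distance between f(P) and f(Q) in Γ_{k'}(V') equals the distance between P and Q in Γ_k(V). Then f is an isometric embedding of Γ_k(V) in Γ_{k'}(V'). -/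
open Submodule Set Function Module

section ApartmentHelpers

variable {R V : Type*} [DivisionRing R] [AddCommGroup V] [Module R V]

/-- The span of the image of a finset under a basis has dimension the cardinality. -/
lemma finrank_span_basis_image {ι : Type*} (b : Basis ι R V) (A : Finset ι) :
    Module.finrank R ↥(Submodule.span R (⇑b '' ↑A)) = A.card := by
  classical
  have himg : ⇑b '' ↑A = ↑(A.image ⇑b) := by simp
  have hind : LinearIndependent R ((↑) : ↑(↑(A.image ⇑b) : Set V) → V) := by
    refine LinearIndepOn.mono ((linearIndepOn_id_range_iff b.injective).mpr b.linearIndependent) ?_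
    rintro x hx
    simp only [Finset.coe_image, Set.mem_image, Finset.mem_coe] at hx
    obtain ⟨i, -, rfl⟩ := hx
    exact Set.mem_range_self i
  rw [himg, finrank_span_finset_eq_card hind, Finset.card_image_of_injective _ b.injective]

lemma span_basis_image_inf {ι : Type*} (b : Basis ι R V) (A B : Set ι) :
    Submodule.span R (⇑b '' A) ⊓ Submodule.span R (⇑b '' B)
      = Submodule.span R (⇑b '' (A ∩ B)) := by
  ext x
  simp only [Submodule.mem_inf, Basis.mem_span_image, Set.subset_inter_iff]

lemma span_basis_image_inj {ι : Type*} (b : Basis ι R V) {A B : Set ι}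
    (h : Submodule.span R (⇑b '' A) = Submodule.span R (⇑b '' B)) : A = B := by
  ext i
  constructor <;> intro hi
  · exact b.self_mem_span_image.1 (h ▸ b.self_mem_span_image.2 hi)
  · exact b.self_mem_span_image.1 (h ▸ b.self_mem_span_image.2 hi)

/-- Within an apartment, any two vertices of the Grassmann graph are connected. -/
lemma grass_reachable_of_apartment {n k : ℕ} (b : Basis (Fin n) R V)
    (P Q : Grass R V k) (A B : Finset (Fin n)) (hA : A.card = k) (hB : B.card = k)
    (hP : P.1 = Submodule.span R (⇑b '' ↑A)) (hQ : Q.1 = Submodule.span R (⇑b '' ↑B)) :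
    (grassGraph R V k).Reachable P Q := by
  classical
  suffices H : ∀ (m : ℕ) (A : Finset (Fin n)) (P : Grass R V k), A.card = k →
      P.1 = Submodule.span R (⇑b '' ↑A) → (A \ B).card = m →
      (grassGraph R V k).Reachable P Q from H _ A P hA hP rfl
  intro m
  induction m with
  | zero =>
    intro A P hA hP hm
    have hAB : A = B := by
      have hsub : A ⊆ B := Finset.sdiff_eq_empty_iff_subset.1 (Finset.card_eq_zero.1 hm)
      exact Finset.eq_of_subset_of_card_le hsub (by rw [hA, hB])
    have : P = Q := Subtype.ext (by rw [hP, hQ, hAB])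
    exact this ▸ SimpleGraph.Reachable.refl P
  | succ m ih =>
    intro A P hA hP hm
    have hne : (A \ B).Nonempty := Finset.card_pos.1 (by omega)
    obtain ⟨a, ha⟩ := hne
    have haA : a ∈ A := (Finset.mem_sdiff.1 ha).1
    have haB : a ∉ B := (Finset.mem_sdiff.1 ha).2
    have hBA : (B \ A).Nonempty := by
      by_contra h
      rw [Finset.not_nonempty_iff_eq_empty, Finset.sdiff_eq_empty_iff_subset] at h
      have : B = A := Finset.eq_of_subset_of_card_le h (by rw [hA, hB])
      rw [this] at haB
      exact haB haA
    obtain ⟨c, hc⟩ := hBA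
    have hcB : c ∈ B := (Finset.mem_sdiff.1 hc).1
    have hcA : c ∉ A := (Finset.mem_sdiff.1 hc).2
    set A' : Finset (Fin n) := insert c (A.erase a) with hA'def
    have hcnot : c ∉ A.erase a := fun h => hcA (Finset.mem_of_mem_erase h)
    have hA' : A'.card = k := by
      rw [hA'def, Finset.card_insert_of_notMem hcnot, Finset.card_erase_of_mem haA, hA]
      have hk1 : 1 ≤ k := hA ▸ Finset.card_pos.2 ⟨a, haA⟩
      omega
    set P' : Grass R V k := ⟨Submodule.span R (⇑b '' ↑A'),
      by rw [finrank_span_basis_image]; exact hA'⟩ with hP'def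
    have hinter : A ∩ A' = A.erase a := by
      ext i
      simp only [hA'def, Finset.mem_inter, Finset.mem_insert, Finset.mem_erase]
      constructor
      · rintro ⟨hiA, hi | ⟨hia, -⟩⟩
        · exact absurd (hi ▸ hiA) hcA
        · exact ⟨hia, hiA⟩
      · rintro ⟨hia, hiA⟩
        exact ⟨hiA, Or.inr ⟨hia, hiA⟩⟩
    have hadj : (grassGraph R V k).Adj P P' := by
      constructor
      · intro h
        have : (↑A : Set (Fin n)) = ↑A' := by
          apply span_basis_image_inj b
          rw [← hP, h]
        have : A = A' := Finset.coe_injective this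
        rw [this] at haA
        simp only [hA'def, Finset.mem_insert, Finset.mem_erase] at haA
        rcases haA with h1 | h1
        · exact haB (h1 ▸ hcB)
        · exact h1.1 rfl
      · rw [hP]
        show Module.finrank R ↥(Submodule.span R (⇑b '' ↑A) ⊓ Submodule.span R (⇑b '' ↑A')) = k - 1
        rw [span_basis_image_inf, ← Finset.coe_inter, hinter, finrank_span_basis_image,
          Finset.card_erase_of_mem haA, hA]
    have hsd : A' \ B = (A \ B).erase a := by
      ext i
      simp only [hA'def, Finset.mem_sdiff, Finset.mem_insert, Finset.mem_erase]
      constructor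
      · rintro ⟨hi | ⟨hia, hiA⟩, hiB⟩
        · exact absurd (hi ▸ hcB) hiB
        · exact ⟨hia, hiA, hiB⟩
      · rintro ⟨hia, hiA, hiB⟩
        exact ⟨Or.inr ⟨hia, hiA⟩, hiB⟩
    have hcard' : (A' \ B).card = m := by
      rw [hsd, Finset.card_erase_of_mem ha, hm]
      omega
    exact (hadj.reachable).trans (ih A' P' hA' rfl hcard')


/-- Any two `k`-subspaces lie in a common apartment. -/
lemma exists_common_apartment [FiniteDimensional R V] {n k : ℕ}
    (hV : Module.finrank R V = n) (P Q : Grass R V k) :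
    ∃ (b : Basis (Fin n) R V) (A B : Finset (Fin n)), A.card = k ∧ B.card = k ∧
      P.1 = Submodule.span R (⇑b '' ↑A) ∧ Q.1 = Submodule.span R (⇑b '' ↑B) := by
  classical
  obtain ⟨s, hs_sub, hs_span, hs_ind⟩ := exists_linearIndependent R (↑(P.1 ⊓ Q.1) : Set V)
  have hs_span' : Submodule.span R s = P.1 ⊓ Q.1 := hs_span.trans (Submodule.span_eq _)
  have hsP0 : s ⊆ ↑P.1 := fun x hx => (Submodule.mem_inf.1 (hs_sub hx)).1
  have hsQ0 : s ⊆ ↑Q.1 := fun x hx => (Submodule.mem_inf.1 (hs_sub hx)).2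
  obtain ⟨sP, hsP_sub, hs_sP, hP_spanle, (hsP_ind : LinearIndependent R ((↑) : sP → V))⟩ := exists_linearIndepOn_id_extension hs_ind hsP0
  obtain ⟨sQ, hsQ_sub, hs_sQ, hQ_spanle, (hsQ_ind : LinearIndependent R ((↑) : sQ → V))⟩ := exists_linearIndepOn_id_extension hs_ind hsQ0
  have hsP_span : Submodule.span R sP = P.1 := by
    refine le_antisymm (Submodule.span_le.2 hsP_sub) ?_
    conv_lhs => rw [← Submodule.span_eq P.1]
    exact Submodule.span_le.2 hP_spanle
  have hsQ_span : Submodule.span R sQ = Q.1 := by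
    refine le_antisymm (Submodule.span_le.2 hsQ_sub) ?_
    conv_lhs => rw [← Submodule.span_eq Q.1]
    exact Submodule.span_le.2 hQ_spanle
  -- `span s` and `span (sQ \ s)` are disjoint
  have hdisj2 : Disjoint (Submodule.span R s) (Submodule.span R (sQ \ s)) := by
    have h1 : s = Subtype.val '' ((Subtype.val : sQ → V) ⁻¹' s) := by
      rw [Subtype.image_preimage_coe]
      exact (Set.inter_eq_right.2 hs_sQ).symm
    have h2 : sQ \ s = Subtype.val '' ((Subtype.val : sQ → V) ⁻¹' (sQ \ s)) := by
      rw [Subtype.image_preimage_coe]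
      exact (Set.inter_eq_right.2 Set.diff_subset).symm
    have hds : Disjoint ((Subtype.val : sQ → V) ⁻¹' s) ((Subtype.val : sQ → V) ⁻¹' (sQ \ s)) := by
      rw [Set.disjoint_iff]
      rintro x ⟨hx1, hx2⟩
      exact ((Set.mem_diff _).1 hx2).2 hx1
    have := hsQ_ind.disjoint_span_image hds
    rwa [← h1, ← h2] at this
  have hdisj : Disjoint (Submodule.span R sP) (Submodule.span R (sQ \ s)) := by
    rw [Submodule.disjoint_def]
    intro v hvP hvQs
    have hvQ : v ∈ Q.1 := by
      have : Submodule.span R (sQ \ s) ≤ Q.1 := by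
        rw [← hsQ_span]; exact Submodule.span_mono Set.diff_subset
      exact this hvQs
    have hvs : v ∈ Submodule.span R s := by
      rw [hs_span']
      exact Submodule.mem_inf.2 ⟨hsP_span ▸ hvP, hvQ⟩
    exact Submodule.disjoint_def.1 hdisj2 v hvs hvQs
  have hunion_ind : LinearIndependent R ((↑) : ↥(sP ∪ (sQ \ s)) → V) :=
    LinearIndepOn.id_union hsP_ind (LinearIndepOn.mono hsQ_ind Set.diff_subset) hdisj
  have hunion_eq : sP ∪ sQ = sP ∪ (sQ \ s) := by
    ext x
    simp only [Set.mem_union, Set.mem_diff]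
    constructor
    · rintro (h | h)
      · exact Or.inl h
      · by_cases hxs : x ∈ s
        · exact Or.inl (hs_sP hxs)
        · exact Or.inr ⟨h, hxs⟩
    · rintro (h | h)
      · exact Or.inl h
      · exact Or.inr h.1
  rw [← hunion_eq] at hunion_ind
  obtain ⟨bs, -, hsub_bs, hspan_bs, (hbs_ind : LinearIndependent R ((↑) : bs → V))⟩ :=
    exists_linearIndepOn_id_extension hunion_ind (Set.subset_univ _)
  have hbs_top : Submodule.span R bs = ⊤ :=
    eq_top_iff.2 (fun x _ => hspan_bs (Set.mem_univ x))
  haveI : Fintype ↥bs := (hbs_ind.setFinite).fintype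
  let B0 : Basis ↥bs R V := Basis.mk hbs_ind (by rw [Subtype.range_coe]; exact hbs_top.ge)
  have hcard : Fintype.card ↥bs = n := by rw [← hV, finrank_eq_card_basis B0]
  let e : ↥bs ≃ Fin n := Fintype.equivFinOfCardEq hcard
  let b : Basis (Fin n) R V := B0.reindex e
  have hb_apply : ∀ i, b i = ↑(e.symm i) := fun i => by
    rw [Module.Basis.reindex_apply, Module.Basis.mk_apply]
  have key : ∀ t : Set V, t ⊆ bs → ∃ A : Finset (Fin n), ⇑b '' ↑A = t := by
    intro t ht
    refine ⟨Finset.univ.filter (fun i => ↑(e.symm i) ∈ t), ?_⟩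
    ext x
    simp only [Set.mem_image, Finset.coe_filter, Finset.mem_univ, true_and, Set.mem_setOf_eq]
    constructor
    · rintro ⟨i, hi, rfl⟩
      rw [hb_apply]
      exact hi
    · intro hx
      refine ⟨e ⟨x, ht hx⟩, ?_, ?_⟩
      · rw [Equiv.symm_apply_apply]
        exact hx
      · rw [hb_apply, Equiv.symm_apply_apply]
  obtain ⟨A, hAeq⟩ := key sP (fun x hx => hsub_bs (Or.inl hx))
  obtain ⟨B, hBeq⟩ := key sQ (fun x hx => hsub_bs (Or.inr hx))
  have hPA : P.1 = Submodule.span R (⇑b '' ↑A) := by rw [hAeq, hsP_span]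
  have hQB : Q.1 = Submodule.span R (⇑b '' ↑B) := by rw [hBeq, hsQ_span]
  refine ⟨b, A, B, ?_, ?_, hPA, hQB⟩
  · rw [← finrank_span_basis_image b A, ← hPA]; exact P.2
  · rw [← finrank_span_basis_image b B, ← hQB]; exact Q.2

end ApartmentHelpers

/-- If the restriction of `f : G_k(V) → G_{k'}(V')` to every apartment of
`G_k(V)` preserves graph distances, then `f` is an isometric embedding of `Γ_k(V)` in
`Γ_{k'}(V')`. -/
theorem isometric_on_apartments_isometric_embedding
    {R V R' V' : Type*} [DivisionRing R] [AddCommGroup V] [Module R V]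
    [DivisionRing R'] [AddCommGroup V'] [Module R' V']
    [FiniteDimensional R V] [FiniteDimensional R' V'] (n n' k k' : ℕ)
    (hV : Module.finrank R V = n) (hV' : Module.finrank R' V' = n')
    (hk1 : 1 ≤ k) (hkn : k ≤ n - 1) (hk'1 : 1 ≤ k') (hk'n : k' ≤ n' - 1)
    (f : Grass R V k → Grass R' V' k')
    (hf : ∀ 𝒜 : Set (Grass R V k), IsApartment R V n k 𝒜 →
      ∀ P ∈ 𝒜, ∀ Q ∈ 𝒜,
        (grassGraph R' V' k').dist (f P) (f Q) = (grassGraph R V k).dist P Q) :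
    Function.Injective f ∧
      ∀ P Q : Grass R V k,
        (grassGraph R' V' k').dist (f P) (f Q) = (grassGraph R V k).dist P Q := by
  have key : ∀ P Q : Grass R V k,
      (grassGraph R' V' k').dist (f P) (f Q) = (grassGraph R V k).dist P Q := by
    intro P Q
    obtain ⟨b, A, B, hA, hB, hPA, hQB⟩ := exists_common_apartment hV P Q
    exact hf {P : Grass R V k | P.1 ∈ JkSet R k ⇑b} ⟨b, rfl⟩ P ⟨A, hA, hPA⟩ Q ⟨B, hB, hQB⟩
  refine ⟨?_, key⟩
  intro P Q h
  by_contra hne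
  obtain ⟨b, A, B, hA, hB, hPA, hQB⟩ := exists_common_apartment hV P Q
  have hreach := grass_reachable_of_apartment b P Q A B hA hB hPA hQB
  have hpos := hreach.pos_dist_of_ne hne
  have hd := key P Q
  rw [h, SimpleGraph.dist_self] at hd
  omega
end
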